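/- arXiv:0901.2714 — 5 statements merged into one kernel-verified Lean document; each statement's English description precedes it below -/
import Mathlib

section
/- Let M be a real-valued random variable on a probability space (Ω,F,P) such that E[e^{λM}] < ∞ for every λ > 0 and P(M > 0) > 0. Write T_M(z) = P(M > z). Then E[e^{λM}] ~ λ ∫_0^∞ e^{λz} T_M(z) dz as λ → +∞, i.e. the ratio of the two sides tends to 1. -/
open MeasureTheory Filter Real

section Aux

variable {Ω : Type*} [MeasurableSpace Ω] (P : Measure Ω) [IsProbabilityMeasure P]

/-- interval integral of `lam * exp (lam * t)` -/
lemma aux_intervalIntegral (lam x : ℝ) :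
    ∫ t in (0:ℝ)..x, lam * Real.exp (lam * t) = Real.exp (lam * x) - 1 := by
  have hderiv : ∀ t ∈ Set.uIcc (0:ℝ) x,
      HasDerivAt (fun t => Real.exp (lam * t)) (lam * Real.exp (lam * t)) t := by
    intro t _
    have h1 : HasDerivAt (fun t : ℝ => lam * t) lam t := by
      simpa using (hasDerivAt_id t).const_mul lam
    have := h1.exp
    simpa [mul_comm] using this
  have hint : IntervalIntegrable (fun t => lam * Real.exp (lam * t)) volume 0 x :=
    (Continuous.intervalIntegrable (by continuity) 0 x)
  have := intervalIntegral.integral_eq_sub_of_hasDerivAt hderiv hint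
  simpa using this

end Aux

/-- If `M` is a real random variable with `E[e^{λM}] < ∞` for all `λ > 0` and `P(M > 0) > 0`,
then `E[e^{λM}] ∼ λ ∫_0^∞ e^{λz} P(M > z) dz` as `λ → ∞`. -/
theorem mgf_asymptotic_tail_integral
    {Ω : Type*} [MeasurableSpace Ω] (P : Measure Ω) [IsProbabilityMeasure P]
    (M : Ω → ℝ) (hM : Measurable M)
    (h_int : ∀ lam : ℝ, 0 < lam → Integrable (fun ω => Real.exp (lam * M ω)) P)
    (h_pos : 0 < P {ω | 0 < M ω}) :
    Tendsto
      (fun lam : ℝ =>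
        (∫ ω, Real.exp (lam * M ω) ∂P) /
          (lam * ∫ z in Set.Ioi (0 : ℝ), Real.exp (lam * z) * (P {ω | z < M ω}).toReal))
      atTop (nhds 1) := by
  classical
  set f : Ω → ℝ := fun ω => max (M ω) 0 with hf_def
  have hf_meas : Measurable f := hM.max measurable_const
  have hf_nn : ∀ ω, 0 ≤ f ω := fun ω => le_max_right _ _
  -- A lam : mgf, B lam : mgf of truncation, I lam : tail integral
  set A : ℝ → ℝ := fun lam => ∫ ω, Real.exp (lam * M ω) ∂P with hA_def
  set B : ℝ → ℝ := fun lam => ∫ ω, Real.exp (lam * f ω) ∂P with hB_def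
  set I : ℝ → ℝ := fun lam => ∫ z in Set.Ioi (0:ℝ),
    Real.exp (lam * z) * (P {ω | z < M ω}).toReal with hI_def
  -- Integrability of exp (lam * f)
  have hB_int : ∀ lam : ℝ, 0 < lam → Integrable (fun ω => Real.exp (lam * f ω)) P := by
    intro lam hlam
    refine Integrable.mono' ((h_int lam hlam).add (integrable_const 1))
      ((hM.max measurable_const).const_mul lam).exp.aestronglyMeasurable ?_
    refine Filter.Eventually.of_forall fun ω => ?_
    simp only [Pi.add_apply]
    rw [Real.norm_eq_abs, abs_of_pos (Real.exp_pos _)]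
    rcases le_total (M ω) 0 with h | h
    · have hfo : f ω = 0 := max_eq_right h
      rw [hfo]
      simp only [mul_zero, Real.exp_zero]
      nlinarith [Real.exp_pos (lam * M ω)]
    · have hfo : f ω = M ω := max_eq_left h
      rw [hfo]
      nlinarith [Real.exp_pos (lam * M ω)]
  -- Key identity: for lam > 0, lam * I lam = B lam - 1
  have key : ∀ lam : ℝ, 0 < lam → lam * I lam = B lam - 1 := by
    intro lam hlam
    have g_intble : ∀ t > (0:ℝ),
        IntervalIntegrable (fun s => lam * Real.exp (lam * s)) volume 0 t :=
      fun t _ => Continuous.intervalIntegrable (by continuity) 0 t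
    have g_nn : ∀ᵐ t ∂(volume.restrict (Set.Ioi (0:ℝ))),
        0 ≤ lam * Real.exp (lam * t) :=
      Filter.Eventually.of_forall fun t => by positivity
    have layer := lintegral_comp_eq_lintegral_meas_lt_mul P
      (Filter.Eventually.of_forall hf_nn) hf_meas.aemeasurable g_intble g_nn
    -- rewrite LHS of layer cake
    have hL : ∫⁻ ω, ENNReal.ofReal (∫ t in (0:ℝ)..f ω, lam * Real.exp (lam * t)) ∂P
        = ENNReal.ofReal (B lam - 1) := by
      have h1 : ∀ ω, (∫ t in (0:ℝ)..f ω, lam * Real.exp (lam * t))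
          = Real.exp (lam * f ω) - 1 := fun ω => aux_intervalIntegral lam (f ω)
      simp_rw [h1]
      rw [← ofReal_integral_eq_lintegral_ofReal]
      · congr 1
        rw [integral_sub (hB_int lam hlam) (integrable_const 1)]
        simp [hB_def]
      · exact (hB_int lam hlam).sub (integrable_const 1)
      · refine Filter.Eventually.of_forall fun ω => ?_
        simp only [Pi.zero_apply]
        have : (1:ℝ) ≤ Real.exp (lam * f ω) := by
          rw [← Real.exp_zero]
          exact Real.exp_le_exp.mpr (by positivity)
        linarith
    -- tail sets agree on Ioi 0
    have hsets : ∀ t ∈ Set.Ioi (0:ℝ), {a | t < f a} = {ω | t < M ω} := by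
      intro t ht
      ext a
      simp only [Set.mem_setOf_eq, hf_def, lt_max_iff]
      exact ⟨fun h => h.resolve_right (by simpa using not_lt.mpr (le_of_lt ht)),
        fun h => Or.inl h⟩
    have hR : ∫⁻ t in Set.Ioi (0:ℝ), P {a | t < f a} * ENNReal.ofReal (lam * Real.exp (lam * t))
        = ∫⁻ t in Set.Ioi (0:ℝ), P {ω | t < M ω} * ENNReal.ofReal (lam * Real.exp (lam * t)) := by
      refine setLIntegral_congr_fun measurableSet_Ioi ?_
      exact fun t ht => by rw [hsets t ht]
    rw [hL, hR] at layer
    -- turn RHS lintegral into a real integral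
    have hT_meas : Measurable (fun t : ℝ => P {ω | t < M ω}) := by
      have : Antitone (fun t : ℝ => P {ω | t < M ω}) := by
        intro s t hst
        exact measure_mono fun ω hω => lt_of_le_of_lt hst hω
      exact this.measurable
    have hfin : ∀ᵐ t ∂(volume.restrict (Set.Ioi (0:ℝ))),
        P {ω | t < M ω} * ENNReal.ofReal (lam * Real.exp (lam * t)) < ⊤ :=
      Filter.Eventually.of_forall fun t =>
        ENNReal.mul_lt_top (lt_of_le_of_lt prob_le_one ENNReal.one_lt_top) ENNReal.ofReal_lt_top
    have hmeas2 : AEMeasurable (fun t : ℝ => P {ω | t < M ω} * ENNReal.ofReal (lam * Real.exp (lam * t)))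
        (volume.restrict (Set.Ioi (0:ℝ))) :=
      (hT_meas.mul (ENNReal.measurable_ofReal.comp ((measurable_id.const_mul lam).exp.const_mul lam))).aemeasurable
    have hreal := integral_toReal hmeas2 hfin
    -- hreal : ∫ t in Ioi 0, (...).toReal = (∫⁻ ...).toReal
    have htoReal : ∀ t : ℝ, (P {ω | t < M ω} * ENNReal.ofReal (lam * Real.exp (lam * t))).toReal
        = lam * (Real.exp (lam * t) * (P {ω | t < M ω}).toReal) := by
      intro t
      rw [ENNReal.toReal_mul, ENNReal.toReal_ofReal (by positivity)]
      ring
    simp_rw [htoReal] at hreal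
    rw [MeasureTheory.integral_const_mul] at hreal
    rw [← layer, ENNReal.toReal_ofReal] at hreal
    · exact hreal
    · -- 0 ≤ B lam - 1
      have : (1:ℝ) ≤ B lam := by
        have h1 : ∫ ω, (1:ℝ) ∂P ≤ B lam := by
          refine integral_mono (integrable_const 1) (hB_int lam hlam) fun ω => ?_
          rw [← Real.exp_zero]
          exact Real.exp_le_exp.mpr (by positivity)
        simpa using h1
      linarith
  -- inequalities: B lam - 1 ≤ A lam ≤ B lam for lam > 0
  have hAB : ∀ lam : ℝ, 0 < lam → A lam ≤ B lam := by
    intro lam hlam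
    refine integral_mono (h_int lam hlam) (hB_int lam hlam) fun ω => ?_
    exact Real.exp_le_exp.mpr (mul_le_mul_of_nonneg_left (le_max_left _ _) hlam.le)
  have hBA : ∀ lam : ℝ, 0 < lam → B lam - 1 ≤ A lam := by
    intro lam hlam
    have h1 : B lam ≤ A lam + 1 := by
      have := integral_mono (hB_int lam hlam) ((h_int lam hlam).add (integrable_const 1))
        (fun ω => ?_)
      · simpa [hA_def, integral_add (h_int lam hlam) (integrable_const 1)] using this
      · simp only [Pi.add_apply]
        rcases le_total (M ω) 0 with h | h
        · have hfo : f ω = 0 := max_eq_right h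
          simp only [hfo, mul_zero, Real.exp_zero]
          nlinarith [Real.exp_pos (lam * M ω)]
        · have hfo : f ω = M ω := max_eq_left h
          rw [hfo]
          nlinarith [Real.exp_pos (lam * M ω)]
    linarith
  -- find ε > 0 with positive tail
  obtain ⟨ε, hε, hc⟩ : ∃ ε : ℝ, 0 < ε ∧ 0 < P {ω | ε < M ω} := by
    by_contra hcon
    push_neg at hcon
    have h0 : ∀ n : ℕ, P {ω | 1 / (n + 1 : ℝ) < M ω} = 0 := by
      intro n
      have := hcon (1 / (n + 1 : ℝ)) (by positivity)
      exact le_antisymm this zero_le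
    have hunion : {ω | 0 < M ω} ⊆ ⋃ n : ℕ, {ω | 1 / (n + 1 : ℝ) < M ω} := by
      intro ω hω
      obtain ⟨n, hn⟩ := exists_nat_one_div_lt (K := ℝ) hω
      exact Set.mem_iUnion.mpr ⟨n, hn⟩
    have := measure_mono (μ := P) hunion
    rw [measure_iUnion_null h0] at this
    exact absurd (le_antisymm this zero_le) (ne_of_gt h_pos)
  set c : ℝ := (P {ω | ε < M ω}).toReal with hc_def
  have hc_pos : 0 < c := ENNReal.toReal_pos (ne_of_gt hc) (measure_ne_top _ _)
  -- lower bound on B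
  have hBlow : ∀ lam : ℝ, 0 < lam → Real.exp (lam * ε) * c ≤ B lam := by
    intro lam hlam
    have hs : MeasurableSet {ω | ε < M ω} := measurableSet_lt measurable_const hM
    have h1 : Real.exp (lam * ε) * c ≤ ∫ ω in {ω | ε < M ω}, Real.exp (lam * f ω) ∂P := by
      refine setIntegral_ge_of_const_le_real hs (measure_ne_top _ _) (fun ω hω => ?_)
        ((hB_int lam hlam).integrableOn)
      have : ε ≤ f ω := le_trans (le_of_lt hω) (le_max_left _ _)
      exact Real.exp_le_exp.mpr (mul_le_mul_of_nonneg_left this hlam.le)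
    have h2 : ∫ ω in {ω | ε < M ω}, Real.exp (lam * f ω) ∂P ≤ B lam :=
      setIntegral_le_integral (hB_int lam hlam)
        (Filter.Eventually.of_forall fun ω => (Real.exp_pos _).le)
    linarith
  -- B - 1 tends to atTop
  have hBtop : Tendsto (fun lam => B lam - 1) atTop atTop := by
    have h1 : Tendsto (fun lam : ℝ => Real.exp (lam * ε) * c - 1) atTop atTop := by
      have h2 : Tendsto (fun lam : ℝ => lam * ε) atTop atTop :=
        Tendsto.atTop_mul_const hε tendsto_id
      have h3 : Tendsto (fun lam : ℝ => Real.exp (lam * ε)) atTop atTop :=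
        Real.tendsto_exp_atTop.comp h2
      have h4 : Tendsto (fun lam : ℝ => Real.exp (lam * ε) * c) atTop atTop :=
        Tendsto.atTop_mul_const hc_pos h3
      exact tendsto_atTop_add_const_right atTop (-1) h4
    refine tendsto_atTop_mono' atTop ?_ h1
    filter_upwards [eventually_gt_atTop (0:ℝ)] with lam hlam
    linarith [hBlow lam hlam]
  -- squeeze
  have hBev : ∀ᶠ lam : ℝ in atTop, 0 < B lam - 1 := hBtop.eventually_gt_atTop 0
  have hupper : Tendsto (fun lam => 1 + 1 / (B lam - 1)) atTop (nhds 1) := by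
    have h1 : Tendsto (fun lam => 1 / (B lam - 1)) atTop (nhds 0) := by
      simpa [one_div, Pi.inv_def] using hBtop.inv_tendsto_atTop
    have := tendsto_const_nhds.add h1 (f := fun lam : ℝ => (1:ℝ)) (x := atTop)
    simpa using this
  refine tendsto_of_tendsto_of_tendsto_of_le_of_le' tendsto_const_nhds hupper ?_ ?_
  · filter_upwards [eventually_gt_atTop (0:ℝ), hBev] with lam hlam hB1
    rw [key lam hlam]
    rw [le_div_iff₀ hB1]
    simpa using hBA lam hlam
  · filter_upwards [eventually_gt_atTop (0:ℝ), hBev] with lam hlam hB1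
    rw [key lam hlam]
    rw [div_le_iff₀ hB1]
    have : (1 + 1 / (B lam - 1)) * (B lam - 1) = B lam := by
      field_simp
      ring
    rw [this]
    exact hAB lam hlam
end

section
/- Let φ ∈ Φ with φ finite on all of ℝ, and define ψ(r) = r/φ^{−1}(r) for r ≥ 2, where φ^{−1} is the inverse of φ on [0,∞). Then there exist constants C₁ = C₁(φ), C₂ = C₂(φ) ∈ (0,∞) such that for every centered random variable ζ: ||ζ||G(ψ) ≤ C₁ ||ζ||B(φ) and ||ζ||B(φ) ≤ C₂ ||ζ||G(ψ). In particular, the spaces B(φ) and G(ψ) coincide as sets of centered random variables and their norms are equivalent. -/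
open MeasureTheory Filter Real ENNReal
open scoped NNReal

/-- The class `Φ`: even, strictly convex, continuous functions `φ : ℝ → [0,∞)` vanishing
exactly at `0`, comparable to `λ²` near the origin and superlinear at infinity. -/
def IsPhiClass (φ : ℝ → ℝ) : Prop :=
  (∀ x : ℝ, φ (-x) = φ x) ∧
  StrictConvexOn ℝ Set.univ φ ∧
  Continuous φ ∧
  (∀ x : ℝ, 0 ≤ φ x) ∧
  (∀ x : ℝ, φ x = 0 ↔ x = 0) ∧
  (∃ Cm Cp : ℝ, 0 < Cm ∧ Cm ≤ Cp ∧
    ∀ x : ℝ, |x| ≤ 1 → Cm * x ^ 2 ≤ φ x ∧ φ x ≤ Cp * x ^ 2) ∧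
  Tendsto (fun x : ℝ => φ x / x) atTop atTop

/-- The `B(φ)`-norm: `inf {τ > 0 : ∀ λ, E exp(λζ) ≤ exp(φ(τλ))}` (`∞` if no such `τ`). -/
noncomputable def BNorm {Ω : Type*} [MeasurableSpace Ω] (P : Measure Ω)
    (φ : ℝ → ℝ) (ζ : Ω → ℝ) : ℝ≥0∞ :=
  sInf {t : ℝ≥0∞ | 0 < t ∧ t ≠ ⊤ ∧ ∀ l : ℝ,
    ∫⁻ ω, ENNReal.ofReal (Real.exp (l * ζ ω)) ∂P ≤
      ENNReal.ofReal (Real.exp (φ (t.toReal * l)))}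

/-- The Grand Lebesgue (moment) norm: `sup_{r ≥ 2} (E|ζ|^r)^{1/r} / ψ(r)`. -/
noncomputable def GNorm {Ω : Type*} [MeasurableSpace Ω] (P : Measure Ω)
    (ψ : ℝ → ℝ) (ζ : Ω → ℝ) : ℝ≥0∞ :=
  ⨆ r : {r : ℝ // 2 ≤ r},
    (∫⁻ ω, ENNReal.ofReal (|ζ ω| ^ (r : ℝ)) ∂P) ^ (1 / (r : ℝ)) /
      ENNReal.ofReal (ψ (r : ℝ))


lemma aux_rpow_le_exp {x r : ℝ} (hx : 0 ≤ x) (hr : 0 < r) :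
    x ^ r ≤ (r / Real.exp 1) ^ r * Real.exp x := by
  rcases hx.eq_or_lt with h | h
  · rw [← h, Real.zero_rpow hr.ne']
    positivity
  · rw [Real.rpow_def_of_pos h, Real.rpow_def_of_pos (by positivity : (0:ℝ) < r / Real.exp 1),
      ← Real.exp_add]
    apply Real.exp_le_exp.2
    rw [Real.log_div hr.ne' (Real.exp_pos 1).ne', Real.log_exp]
    have hlog : Real.log (x / r) ≤ x / r - 1 := Real.log_le_sub_one_of_pos (by positivity)
    have h1 : Real.log x - Real.log r ≤ x / r - 1 := by
      rwa [← Real.log_div h.ne' hr.ne']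
    have h2 : r * (Real.log x - Real.log r) ≤ r * (x / r - 1) :=
      mul_le_mul_of_nonneg_left h1 hr.le
    have h3 : r * (x / r - 1) = x - r := by field_simp
    nlinarith
lemma aux_pow_div_le_factorial (k : ℕ) : ((k : ℝ) / Real.exp 1) ^ k ≤ (Nat.factorial k : ℝ) := by
  induction k with
  | zero => simp
  | succ k ih =>
    have he : (0:ℝ) < Real.exp 1 := Real.exp_pos 1
    have key : ((k:ℝ) + 1) ^ k ≤ Real.exp 1 * (k:ℝ) ^ k := by
      rcases Nat.eq_zero_or_pos k with hk | hk
      · subst hk; simpa using Real.one_le_exp (by norm_num : (0:ℝ) ≤ 1)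
      · have hk' : (0:ℝ) < k := by exact_mod_cast hk
        have h1 : (1 + 1 / (k:ℝ)) ≤ Real.exp (1 / (k:ℝ)) := by
          have := Real.add_one_le_exp (1 / (k:ℝ)); linarith
        have h2 : (1 + 1 / (k:ℝ)) ^ k ≤ Real.exp (1 / (k:ℝ)) ^ k :=
          pow_le_pow_left₀ (by positivity) h1 k
        have h3 : Real.exp (1 / (k:ℝ)) ^ k = Real.exp 1 := by
          rw [← Real.exp_nat_mul]; congr 1; field_simp
        have h4 : ((k:ℝ) + 1) ^ k = (k:ℝ) ^ k * (1 + 1 / (k:ℝ)) ^ k := by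
          rw [← mul_pow]; congr 1; field_simp
        have h5 : (1 + 1 / (k:ℝ)) ^ k ≤ Real.exp 1 := h3 ▸ h2
        rw [h4]
        nlinarith [pow_nonneg hk'.le k]
    calc ((((k+1):ℕ):ℝ) / Real.exp 1) ^ (k+1)
          = ((k:ℝ)+1) * (((k:ℝ)+1) ^ k / (Real.exp 1 ^ k * Real.exp 1)) := by
            rw [div_pow]; push_cast; ring
      _ ≤ ((k:ℝ)+1) * ((k:ℝ) ^ k / Real.exp 1 ^ k) := by
            apply mul_le_mul_of_nonneg_left _ (by positivity)
            rw [div_le_div_iff₀ (by positivity) (by positivity)]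
            calc ((k:ℝ)+1) ^ k * Real.exp 1 ^ k ≤ (Real.exp 1 * (k:ℝ) ^ k) * Real.exp 1 ^ k :=
                  mul_le_mul_of_nonneg_right key (by positivity)
              _ = (k:ℝ) ^ k * (Real.exp 1 ^ k * Real.exp 1) := by ring
      _ ≤ ((k:ℝ)+1) * (Nat.factorial k : ℝ) := by
            apply mul_le_mul_of_nonneg_left _ (by positivity)
            rw [← div_pow]; exact ih
      _ = (Nat.factorial (k+1) : ℝ) := by
            rw [Nat.factorial_succ]; push_cast; ring

lemma aux_exp_le (x : ℝ) : Real.exp x ≤ 1 + x + (Real.exp |x| - 1 - |x|) := by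
  rcases le_or_gt 0 x with h | h
  · rw [abs_of_nonneg h]; linarith
  · rw [abs_of_neg h]
    have hs : Real.sinh x < x := Real.sinh_lt_self_iff.2 h
    rw [Real.sinh_eq] at hs
    linarith

lemma aux_log_le_div_e {s : ℝ} (hs : 0 < s) : Real.log s ≤ s / Real.exp 1 := by
  have := Real.log_le_sub_one_of_pos (x := s / Real.exp 1) (by positivity)
  rw [Real.log_div hs.ne' (Real.exp_pos 1).ne', Real.log_exp] at this
  linarith

section Phi
variable {φ : ℝ → ℝ}

lemma phi_strictmono (heven : ∀ x : ℝ, φ (-x) = φ x)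
    (hconv : StrictConvexOn ℝ Set.univ φ) {a b : ℝ} (ha : 0 ≤ a) (hab : a < b) :
    φ a < φ b := by
  have hb : 0 < b := lt_of_le_of_lt ha hab
  have hne : (-b) ≠ b := by linarith
  have h1 : 0 < (b - a) / (2 * b) := div_pos (by linarith) (by linarith)
  have h2 : 0 < (b + a) / (2 * b) := div_pos (by linarith) (by linarith)
  have h12 : (b - a) / (2 * b) + (b + a) / (2 * b) = 1 := by
    field_simp
    ring
  have := hconv.2 (Set.mem_univ (-b)) (Set.mem_univ b) hne h1 h2 h12
  have harg : ((b - a) / (2 * b)) • (-b) + ((b + a) / (2 * b)) • b = a := by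
    simp only [smul_eq_mul]; field_simp; ring
  rw [harg, heven b, smul_eq_mul, smul_eq_mul, ← add_mul, h12, one_mul] at this
  exact this

lemma phi_mono (heven : ∀ x : ℝ, φ (-x) = φ x)
    (hconv : StrictConvexOn ℝ Set.univ φ) {a b : ℝ} (ha : 0 ≤ a) (hab : a ≤ b) :
    φ a ≤ φ b := by
  rcases hab.eq_or_lt with h | h
  · rw [h]
  · exact (phi_strictmono heven hconv ha h).le

lemma phi_div_mono (hconv : StrictConvexOn ℝ Set.univ φ)
    (h0 : φ 0 = 0) {x y : ℝ} (hx : 0 < x) (hxy : x ≤ y) :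
    φ x ≤ (x / y) * φ y := by
  have hy : 0 < y := lt_of_lt_of_le hx hxy
  have hθ1 : x / y ≤ 1 := div_le_one_of_le₀ hxy hy.le
  have hθ0 : 0 ≤ x / y := by positivity
  have := hconv.convexOn.2 (Set.mem_univ y) (Set.mem_univ 0) hθ0
    (by linarith : (0:ℝ) ≤ 1 - x / y) (by ring)
  simp only [smul_eq_mul, mul_zero, add_zero, h0] at this
  have harg : x / y * y = x := by field_simp
  rw [harg] at this
  linarith

lemma phi_superhom (hconv : StrictConvexOn ℝ Set.univ φ)
    (h0 : φ 0 = 0) {c x : ℝ} (hc : 1 ≤ c) (hx : 0 ≤ x) :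
    c * φ x ≤ φ (c * x) := by
  rcases hx.eq_or_lt with h | h
  · rw [← h]; simp [h0]
  · have hc0 : 0 < c := lt_of_lt_of_le one_pos hc
    have hcx : x ≤ c * x := le_mul_of_one_le_left h.le hc
    have h5 := phi_div_mono hconv h0 h hcx
    have hxd : x / (c * x) = 1 / c := by
      rw [div_eq_div_iff (by positivity) (by positivity)]; ring
    rw [hxd] at h5
    calc c * φ x ≤ c * (1 / c * φ (c * x)) := mul_le_mul_of_nonneg_left h5 hc0.le
      _ = φ (c * x) := by field_simp
end Phi

lemma aux_exp_tsum (y : ℝ) : Real.exp y = ∑' n:ℕ, y^n / (Nat.factorial n : ℝ) := by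
  rw [Real.exp_eq_exp_ℝ, NormedSpace.exp_eq_tsum_div]

lemma aux_summable_shift (y : ℝ) : Summable (fun k:ℕ => y^(k+2) / (Nat.factorial (k+2) : ℝ)) :=
  (Real.summable_pow_div_factorial y).comp_injective (add_left_injective 2)

lemma aux_D_tsum (y : ℝ) :
    Real.exp y - 1 - y = ∑' k:ℕ, y^(k+2) / (Nat.factorial (k+2) : ℝ) := by
  have hs := Real.summable_pow_div_factorial y
  have h0 := Summable.sum_add_tsum_nat_add (f := fun n:ℕ => y^n / (Nat.factorial n : ℝ)) 2 hs
  rw [aux_exp_tsum y, ← h0]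
  simp [Finset.sum_range_succ, Nat.factorial]
  ring

lemma aux_term {u g I ψj : ℝ} (j : ℕ) (hj : 2 ≤ j) (hu : 0 ≤ u) (hg : 0 ≤ g)
    (hI : 0 < I) (hψ : ψj = (j:ℝ) / I) :
    u^j * (g * ψj)^j / (Nat.factorial j : ℝ) ≤ (Real.exp 1 * (g * u) / I)^j := by
  have hjpos : (0:ℝ) < j := by exact_mod_cast lt_of_lt_of_le two_pos hj
  have hY : (0:ℝ) ≤ (Real.exp 1 * (g * u) / I)^j := by positivity
  have hfac : ((j:ℝ)/Real.exp 1)^j ≤ (Nat.factorial j : ℝ) := aux_pow_div_le_factorial j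
  rw [div_le_iff₀ (by positivity : (0:ℝ) < (Nat.factorial j : ℝ))]
  calc u^j * (g * ψj)^j = (Real.exp 1 * (g * u) / I)^j * ((j:ℝ)/Real.exp 1)^j := by
        rw [← mul_pow, ← mul_pow]
        congr 1
        rw [hψ]
        field_simp
    _ ≤ (Real.exp 1 * (g * u) / I)^j * (Nat.factorial j : ℝ) :=
        mul_le_mul_of_nonneg_left hfac hY

lemma aux_T_le_E {φ : ℝ → ℝ} (hconv : StrictConvexOn ℝ Set.univ φ)
    (h0 : φ 0 = 0) (hnonneg : ∀ x, 0 ≤ φ x)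
    {a I : ℝ} (j : ℕ) (ha : 0 < a) (hI : 0 < I) (hφI : φ I = (j:ℝ)) :
    (a / I)^j ≤ Real.exp (φ a) := by
  rcases le_or_gt a I with h | h
  · calc (a/I)^j ≤ 1 := pow_le_one₀ (by positivity) (div_le_one_of_le₀ h hI.le)
      _ ≤ Real.exp (φ a) := Real.one_le_exp (hnonneg a)
  · have hbase : (1:ℝ) < a / I := (one_lt_div hI).2 h
    have hT : (0:ℝ) < (a/I)^j := by positivity
    rw [← Real.exp_log hT]
    apply Real.exp_le_exp.2
    rw [Real.log_pow]
    have hlogpos : 0 < Real.log (a/I) := Real.log_pos hbase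
    have h1 : φ I ≤ (I / a) * φ a := phi_div_mono hconv h0 hI h.le
    have h2 : (j:ℝ) * Real.log (a/I) ≤ (I/a) * φ a * Real.log (a/I) := by
      rw [← hφI]
      exact mul_le_mul_of_nonneg_right h1 hlogpos.le
    have h3 : Real.log (a/I) ≤ (a/I) / Real.exp 1 := aux_log_le_div_e (by positivity)
    have h4 : (I/a) * Real.log (a/I) ≤ 1 / Real.exp 1 := by
      calc (I/a) * Real.log (a/I) ≤ (I/a) * ((a/I) / Real.exp 1) :=
            mul_le_mul_of_nonneg_left h3 (by positivity)
        _ = 1 / Real.exp 1 := by field_simp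
    have he1 : 1 / Real.exp 1 ≤ 1 := by
      rw [div_le_one (Real.exp_pos 1)]
      exact Real.one_le_exp one_pos.le
    calc (j:ℝ) * Real.log (a/I) ≤ (I/a) * φ a * Real.log (a/I) := h2
      _ = φ a * ((I/a) * Real.log (a/I)) := by ring
      _ ≤ φ a * 1 := mul_le_mul_of_nonneg_left (h4.trans he1) (hnonneg a)
      _ = φ a := mul_one _

lemma aux_ofReal_half : ENNReal.ofReal (1/2 : ℝ) = 2⁻¹ := by
  rw [ENNReal.ofReal_div_of_pos two_pos, ENNReal.ofReal_one, ENNReal.ofReal_ofNat, one_div]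

lemma aux_geom_tail {q : ℝ} (h0 : 0 ≤ q) (h : q ≤ 1/2) :
    (∑' k:ℕ, ENNReal.ofReal (q^(k+2))) ≤ ENNReal.ofReal (2*q^2) := by
  have hx : ENNReal.ofReal q ≤ 2⁻¹ := by
    rw [← aux_ofReal_half]; exact ENNReal.ofReal_le_ofReal h
  have hinv : (1 - ENNReal.ofReal q)⁻¹ ≤ 2 := by
    have h1 : (2⁻¹ : ℝ≥0∞) ≤ 1 - ENNReal.ofReal q := by
      rw [← ENNReal.one_sub_inv_two]
      exact tsub_le_tsub_left hx 1
    calc (1 - ENNReal.ofReal q)⁻¹ ≤ (2⁻¹ : ℝ≥0∞)⁻¹ := ENNReal.inv_le_inv' h1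
      _ = 2 := by rw [inv_inv]
  calc (∑' k:ℕ, ENNReal.ofReal (q^(k+2)))
      = ∑' k:ℕ, (ENNReal.ofReal q)^2 * (ENNReal.ofReal q)^k := by
        congr 1; funext k
        rw [ENNReal.ofReal_pow h0, pow_add, mul_comm]
    _ = (ENNReal.ofReal q)^2 * ∑' k:ℕ, (ENNReal.ofReal q)^k := ENNReal.tsum_mul_left
    _ = (ENNReal.ofReal q)^2 * (1 - ENNReal.ofReal q)⁻¹ := by rw [ENNReal.tsum_geometric]
    _ ≤ (ENNReal.ofReal q)^2 * 2 := mul_le_mul_right hinv _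
    _ = ENNReal.ofReal (2*q^2) := by
        rw [← ENNReal.ofReal_pow h0, ← ENNReal.ofReal_ofNat 2,
          ← ENNReal.ofReal_mul (by positivity)]
        congr 1
        ring

lemma aux_tsum_le {N E : ℝ} (hN : 0 ≤ N) (hE : 0 ≤ E) (f : ℕ → ℝ≥0∞)
    (hf : ∀ k, f k ≤ (if ((k:ℝ) + 2 < N) then ENNReal.ofReal E else 0) +
      ENNReal.ofReal ((1/2:ℝ)^(k+2))) :
    ∑' k, f k ≤ ENNReal.ofReal (N+1) * ENNReal.ofReal E + 2 := by
  have hsum1 : (∑' k:ℕ, (if ((k:ℝ) + 2 < N) then ENNReal.ofReal E else 0)) ≤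
      ENNReal.ofReal (N+1) * ENNReal.ofReal E := by
    set M := ⌈N⌉₊ with hM
    have hz : ∀ k ∉ Finset.range M, (if ((k:ℝ) + 2 < N) then ENNReal.ofReal E else 0) = 0 := by
      intro k hk
      rw [Finset.mem_range, not_lt] at hk
      have : N ≤ (k:ℝ) + 2 := by
        calc N ≤ (M:ℝ) := Nat.le_ceil N
          _ ≤ (k:ℝ) := by exact_mod_cast hk
          _ ≤ (k:ℝ) + 2 := by linarith
      simp [not_lt.2 this]
    rw [tsum_eq_sum hz]
    calc ∑ k ∈ Finset.range M, (if ((k:ℝ) + 2 < N) then ENNReal.ofReal E else 0)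
        ≤ ∑ _k ∈ Finset.range M, ENNReal.ofReal E :=
          Finset.sum_le_sum (fun k _ => by split <;> simp)
      _ = (M : ℝ≥0∞) * ENNReal.ofReal E := by
          rw [Finset.sum_const, Finset.card_range, nsmul_eq_mul]
      _ ≤ ENNReal.ofReal (N+1) * ENNReal.ofReal E := by
          apply mul_le_mul_left
          rw [← ENNReal.ofReal_natCast]
          exact ENNReal.ofReal_le_ofReal (Nat.ceil_lt_add_one hN).le
  have hsum2 : (∑' k:ℕ, ENNReal.ofReal ((1/2:ℝ)^(k+2))) ≤ 2 := by
    calc (∑' k:ℕ, ENNReal.ofReal ((1/2:ℝ)^(k+2)))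
        ≤ ∑' k:ℕ, (2⁻¹ : ℝ≥0∞)^k := by
          apply ENNReal.tsum_le_tsum
          intro k
          rw [ENNReal.ofReal_pow (by norm_num), aux_ofReal_half]
          exact pow_le_pow_of_le_one zero_le (by simp) (by omega)
      _ = (1 - 2⁻¹)⁻¹ := ENNReal.tsum_geometric _
      _ = 2 := by rw [ENNReal.one_sub_inv_two, inv_inv]
  calc ∑' k, f k ≤ ∑' k:ℕ, ((if ((k:ℝ) + 2 < N) then ENNReal.ofReal E else 0) +
        ENNReal.ofReal ((1/2:ℝ)^(k+2))) := ENNReal.tsum_le_tsum hf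
    _ = (∑' k:ℕ, (if ((k:ℝ) + 2 < N) then ENNReal.ofReal E else 0)) +
        ∑' k:ℕ, ENNReal.ofReal ((1/2:ℝ)^(k+2)) := ENNReal.tsum_add
    _ ≤ ENNReal.ofReal (N+1) * ENNReal.ofReal E + 2 := add_le_add hsum1 hsum2

lemma dir1 {φ invφ ψ : ℝ → ℝ}
    (heven : ∀ x : ℝ, φ (-x) = φ x)
    (hinv2 : ∀ y : ℝ, 0 ≤ y → 0 ≤ invφ y ∧ φ (invφ y) = y)
    (hzero : ∀ x : ℝ, φ x = 0 ↔ x = 0)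
    (hψ : ∀ r : ℝ, 2 ≤ r → ψ r = r / invφ r)
    {Ω : Type} [MeasurableSpace Ω] (P : Measure Ω) [IsProbabilityMeasure P]
    (ζ : Ω → ℝ) (hmeas : Measurable ζ) :
    GNorm P ψ ζ ≤ ENNReal.ofReal 2 * BNorm P φ ζ := by
  have key : ∀ t ∈ {t : ℝ≥0∞ | 0 < t ∧ t ≠ ⊤ ∧ ∀ l : ℝ,
      ∫⁻ ω, ENNReal.ofReal (Real.exp (l * ζ ω)) ∂P ≤
        ENNReal.ofReal (Real.exp (φ (t.toReal * l)))},
      GNorm P ψ ζ ≤ ENNReal.ofReal 2 * t := by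
    rintro t ⟨htpos, htne, hbd⟩
    set τ := t.toReal with hτdef
    have hτ : 0 < τ := ENNReal.toReal_pos htpos.ne' htne
    apply iSup_le
    rintro ⟨r, hr⟩
    simp only
    have hrpos : (0:ℝ) < r := lt_of_lt_of_le two_pos hr
    set I := invφ r with hIdef
    have hI0 : 0 ≤ I := (hinv2 r (by linarith)).1
    have hφI : φ I = r := (hinv2 r (by linarith)).2
    have hI : 0 < I := by
      rcases hI0.eq_or_lt with h | h
      · exfalso
        have : φ I = 0 := by rw [← h]; exact (hzero 0).2 rfl
        rw [hφI] at this; linarith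
      · exact h
    have hψr : ψ r = r / I := hψ r hr
    have hψpos : 0 < ψ r := by rw [hψr]; positivity
    set l := I / τ with hldef
    have hl : 0 < l := by positivity
    set A := (r / (Real.exp 1 * l)) ^ r with hAdef
    have hA0 : 0 ≤ A := by apply Real.rpow_nonneg; positivity
    have hpt : ∀ ω, ENNReal.ofReal (|ζ ω| ^ r) ≤
        ENNReal.ofReal A * (ENNReal.ofReal (Real.exp (l * ζ ω)) +
          ENNReal.ofReal (Real.exp (-l * ζ ω))) := by
      intro ω
      rw [← ENNReal.ofReal_add (Real.exp_nonneg _) (Real.exp_nonneg _),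
        ← ENNReal.ofReal_mul hA0]
      apply ENNReal.ofReal_le_ofReal
      set x := l * ζ ω with hxdef
      have habs : |ζ ω| = |x| / l := by
        rw [hxdef, abs_mul, abs_of_pos hl]; field_simp
      have h1 : |ζ ω| ^ r = |x| ^ r / l ^ r := by
        rw [habs, Real.div_rpow (abs_nonneg _) hl.le]
      have h2 : |x| ^ r ≤ (r / Real.exp 1) ^ r * Real.exp |x| :=
        aux_rpow_le_exp (abs_nonneg _) hrpos
      have h3 : Real.exp |x| ≤ Real.exp x + Real.exp (-x) := by
        rcases abs_cases x with ⟨h, _⟩ | ⟨h, _⟩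
        · rw [h]; nlinarith [Real.exp_nonneg (-x)]
        · rw [h]; nlinarith [Real.exp_nonneg x]
      have h4 : |x| ^ r ≤ (r / Real.exp 1) ^ r * (Real.exp x + Real.exp (-x)) := by
        calc |x| ^ r ≤ (r / Real.exp 1) ^ r * Real.exp |x| := h2
          _ ≤ (r / Real.exp 1) ^ r * (Real.exp x + Real.exp (-x)) :=
            mul_le_mul_of_nonneg_left h3 (Real.rpow_nonneg (by positivity) r)
      have hAeq : A = (r / Real.exp 1) ^ r / l ^ r := by
        rw [hAdef, ← Real.div_rpow (by positivity) hl.le]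
        congr 1
        field_simp
      have hexp : Real.exp (-l * ζ ω) = Real.exp (-x) := by rw [hxdef]; ring_nf
      rw [h1, hAeq, hexp]
      have hlr : (0:ℝ) < l ^ r := Real.rpow_pos_of_pos hl r
      calc |x| ^ r / l ^ r
          ≤ ((r / Real.exp 1) ^ r * (Real.exp x + Real.exp (-x))) / l ^ r :=
            div_le_div_of_nonneg_right h4 hlr.le
        _ = (r / Real.exp 1) ^ r / l ^ r * (Real.exp x + Real.exp (-x)) := by ring
    -- integrate
    have hm1 : Measurable fun ω => ENNReal.ofReal (Real.exp (l * ζ ω)) :=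
      (Real.measurable_exp.comp (hmeas.const_mul l)).ennreal_ofReal
    have hm2 : Measurable fun ω => ENNReal.ofReal (Real.exp (-l * ζ ω)) :=
      (Real.measurable_exp.comp (hmeas.const_mul (-l))).ennreal_ofReal
    have hτl : τ * l = I := by rw [hldef]; field_simp
    have hτl' : τ * (-l) = -I := by rw [mul_neg, hτl]
    have hMbd : (∫⁻ ω, ENNReal.ofReal (|ζ ω| ^ r) ∂P) ≤
        ENNReal.ofReal (2 * (τ * ψ r) ^ r) := by
      have hA2 : A * (Real.exp r + Real.exp r) = 2 * (τ * ψ r) ^ r := by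
        have hbase : r / (Real.exp 1 * l) = (τ * ψ r) / Real.exp 1 := by
          rw [hψr, hldef]; field_simp
        have hAeq2 : A = (τ * ψ r) ^ r / Real.exp r := by
          rw [hAdef, hbase, Real.div_rpow (by positivity) (Real.exp_pos 1).le,
            Real.exp_one_rpow]
        rw [hAeq2]
        field_simp
        ring
      calc (∫⁻ ω, ENNReal.ofReal (|ζ ω| ^ r) ∂P)
          ≤ ∫⁻ ω, ENNReal.ofReal A * (ENNReal.ofReal (Real.exp (l * ζ ω)) +
              ENNReal.ofReal (Real.exp (-l * ζ ω))) ∂P := lintegral_mono hpt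
        _ = ENNReal.ofReal A * ∫⁻ ω, (ENNReal.ofReal (Real.exp (l * ζ ω)) +
              ENNReal.ofReal (Real.exp (-l * ζ ω))) ∂P :=
            lintegral_const_mul _ (hm1.add hm2)
        _ = ENNReal.ofReal A * ((∫⁻ ω, ENNReal.ofReal (Real.exp (l * ζ ω)) ∂P) +
              ∫⁻ ω, ENNReal.ofReal (Real.exp (-l * ζ ω)) ∂P) := by
            rw [lintegral_add_left hm1]
        _ ≤ ENNReal.ofReal A * (ENNReal.ofReal (Real.exp (φ (τ * l))) +
              ENNReal.ofReal (Real.exp (φ (τ * (-l))))) :=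
            mul_le_mul_right (add_le_add (hbd l) (hbd (-l))) _
        _ = ENNReal.ofReal (2 * (τ * ψ r) ^ r) := by
            rw [hτl, hτl', heven I, hφI,
              ← ENNReal.ofReal_add (Real.exp_nonneg _) (Real.exp_nonneg _),
              ← ENNReal.ofReal_mul hA0, hA2]
    -- take r-th root
    have hψr0 : 0 ≤ τ * ψ r := by positivity
    have hroot : (∫⁻ ω, ENNReal.ofReal (|ζ ω| ^ r) ∂P) ^ (1 / r) ≤
        ENNReal.ofReal (2 * (τ * ψ r)) := by
      have h1 : (∫⁻ ω, ENNReal.ofReal (|ζ ω| ^ r) ∂P) ^ (1 / r) ≤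
          (ENNReal.ofReal (2 * (τ * ψ r) ^ r)) ^ (1 / r) :=
        ENNReal.rpow_le_rpow hMbd (by positivity)
      have h2 : (ENNReal.ofReal (2 * (τ * ψ r) ^ r)) ^ (1 / r) =
          ENNReal.ofReal ((2 * (τ * ψ r) ^ r) ^ (1 / r)) :=
        ENNReal.ofReal_rpow_of_nonneg (by positivity) (by positivity)
      have h3 : (2 * (τ * ψ r) ^ r) ^ (1 / r) = 2 ^ (1/r) * (τ * ψ r) := by
        rw [Real.mul_rpow (by norm_num) (Real.rpow_nonneg hψr0 r),
          ← Real.rpow_mul hψr0, mul_one_div_cancel hrpos.ne', Real.rpow_one]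
      have h4 : (2:ℝ) ^ (1/r) ≤ 2 := by
        calc (2:ℝ) ^ (1/r) ≤ 2 ^ (1:ℝ) :=
              Real.rpow_le_rpow_of_exponent_le (by norm_num)
                (by rw [div_le_one hrpos]; linarith)
          _ = 2 := Real.rpow_one 2
      calc (∫⁻ ω, ENNReal.ofReal (|ζ ω| ^ r) ∂P) ^ (1 / r)
          ≤ ENNReal.ofReal (2 ^ (1/r) * (τ * ψ r)) := by rw [← h3, ← h2]; exact h1
        _ ≤ ENNReal.ofReal (2 * (τ * ψ r)) :=
            ENNReal.ofReal_le_ofReal (mul_le_mul_of_nonneg_right h4 hψr0)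
    apply ENNReal.div_le_of_le_mul
    calc (∫⁻ ω, ENNReal.ofReal (|ζ ω| ^ r) ∂P) ^ (1 / r)
        ≤ ENNReal.ofReal (2 * (τ * ψ r)) := hroot
      _ = ENNReal.ofReal 2 * t * ENNReal.ofReal (ψ r) := by
          rw [← ENNReal.ofReal_toReal htne, ← hτdef, ← ENNReal.ofReal_mul (by norm_num),
            ← ENNReal.ofReal_mul (by positivity)]
          ring_nf
  -- conclude via sInf
  have h2ne : (ENNReal.ofReal 2) ≠ 0 := by simp
  have h2top : (ENNReal.ofReal 2) ≠ ⊤ := ENNReal.ofReal_ne_top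
  have hdiv : GNorm P ψ ζ / ENNReal.ofReal 2 ≤ BNorm P φ ζ :=
    le_sInf fun t ht => ENNReal.div_le_of_le_mul' (key t ht)
  calc GNorm P ψ ζ = ENNReal.ofReal 2 * (GNorm P ψ ζ / ENNReal.ofReal 2) :=
        (ENNReal.mul_div_cancel h2ne h2top).symm
    _ ≤ ENNReal.ofReal 2 * BNorm P φ ζ := mul_le_mul_right hdiv _

set_option maxHeartbeats 2000000 in
lemma dir2 {φ invφ ψ : ℝ → ℝ}
    (heven : ∀ x : ℝ, φ (-x) = φ x)
    (hconv : StrictConvexOn ℝ Set.univ φ)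
    (hnonneg : ∀ x : ℝ, 0 ≤ φ x)
    (hzero : ∀ x : ℝ, φ x = 0 ↔ x = 0)
    {Cm : ℝ} (hCm : 0 < Cm) (hlow : ∀ x : ℝ, |x| ≤ 1 → Cm * x^2 ≤ φ x)
    (hinv1 : ∀ x : ℝ, 0 ≤ x → invφ (φ x) = x)
    (hinv2 : ∀ y : ℝ, 0 ≤ y → 0 ≤ invφ y ∧ φ (invφ y) = y)
    (hψ : ∀ r : ℝ, 2 ≤ r → ψ r = r / invφ r) :
    ∃ C₂ : ℝ, 0 < C₂ ∧ ∀ (Ω : Type) (_ : MeasurableSpace Ω) (P : Measure Ω),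
      IsProbabilityMeasure P → ∀ ζ : Ω → ℝ, Measurable ζ → Integrable ζ P →
      (∫ ω, ζ ω ∂P) = 0 →
      BNorm P φ ζ ≤ ENNReal.ofReal C₂ * GNorm P ψ ζ := by
  have hφ0 : φ 0 = 0 := (hzero 0).2 rfl
  have hphi_pos : ∀ x : ℝ, 0 < x → 0 < φ x := by
    intro x hx
    rcases (hnonneg x).eq_or_lt with h | h
    · exfalso; exact hx.ne' ((hzero x).1 h.symm)
    · exact h
  set e := Real.exp 1 with hedef
  have he : 0 < e := Real.exp_pos 1
  have he1 : 1 ≤ e := Real.one_le_exp one_pos.le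
  -- basic facts about invφ
  have hIψ : ∀ r : ℝ, 2 ≤ r → 0 < invφ r ∧ 0 < ψ r ∧ ψ r = r / invφ r := by
    intro r hr
    have h2 : (0:ℝ) ≤ r := by linarith
    have hI0 : 0 ≤ invφ r := (hinv2 r h2).1
    have hφI : φ (invφ r) = r := (hinv2 r h2).2
    have hI : 0 < invφ r := by
      rcases hI0.eq_or_lt with h | h
      · exfalso
        have : φ (invφ r) = 0 := by rw [← h, hφ0]
        rw [hφI] at this; linarith
      · exact h
    have hψr := hψ r hr
    refine ⟨hI, ?_, hψr⟩
    rw [hψr]; positivity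
  have hinvmono : ∀ y₁ y₂ : ℝ, 0 ≤ y₁ → y₁ ≤ y₂ → invφ y₁ ≤ invφ y₂ := by
    intro y₁ y₂ h0 h12
    by_contra hcon
    push_neg at hcon
    have h1 := (hinv2 y₁ h0).2
    have h2 := (hinv2 y₂ (by linarith)).2
    have := phi_strictmono heven hconv (hinv2 y₂ (by linarith)).1 hcon
    rw [h1, h2] at this
    linarith
  set b := invφ 2 with hbdef
  have hb : 0 < b := (hIψ 2 le_rfl).1
  set Cs := Real.sqrt (2 * (e/b)^2 / Cm) with hCsdef
  have hCs : 0 < Cs := Real.sqrt_pos.2 (by positivity)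
  set v₀ := min (b/(2*e)) (1/Cs) with hv₀def
  have hv₀ : 0 < v₀ := lt_min (by positivity) (by positivity)
  set P0 := φ (2*e*v₀) with hP0def
  have hP0 : 0 < P0 := hphi_pos _ (by positivity)
  set Cl := 2*e*(2 + 4/P0) with hCldef
  have hCl : 0 < Cl := by positivity
  refine ⟨max Cs Cl, lt_of_lt_of_le hCs (le_max_left _ _), ?_⟩
  set C₂ := max Cs Cl with hC₂def
  have hC₂ : 0 < C₂ := lt_of_lt_of_le hCs (le_max_left _ _)
  intro Ω mΩ P hP ζ hmeas hint hcent
  by_cases hGtop : GNorm P ψ ζ = ⊤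
  · rw [hGtop, ENNReal.mul_top (ENNReal.ofReal_pos.2 hC₂).ne']
    exact le_top
  set g := (GNorm P ψ ζ).toReal with hgdef
  have hg0 : 0 ≤ g := ENNReal.toReal_nonneg
  have hGg : GNorm P ψ ζ = ENNReal.ofReal g := (ENNReal.ofReal_toReal hGtop).symm
  -- moment bounds
  have hmom : ∀ j : ℕ, 2 ≤ (j:ℝ) →
      (∫⁻ ω, ENNReal.ofReal (|ζ ω| ^ ((j:ℕ):ℝ)) ∂P) ≤
        ENNReal.ofReal ((g * ψ (j:ℝ))^(j:ℕ)) := by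
    intro j hj
    have hjpos : (0:ℝ) < j := by linarith
    obtain ⟨hI, hψpos, _⟩ := hIψ (j:ℝ) hj
    have hterm : (∫⁻ ω, ENNReal.ofReal (|ζ ω| ^ ((j:ℕ):ℝ)) ∂P) ^ (1/((j:ℕ):ℝ)) /
        ENNReal.ofReal (ψ (j:ℝ)) ≤ GNorm P ψ ζ :=
      le_iSup (fun r : {r : ℝ // 2 ≤ r} =>
        (∫⁻ ω, ENNReal.ofReal (|ζ ω| ^ (r : ℝ)) ∂P) ^ (1 / (r : ℝ)) /
          ENNReal.ofReal (ψ (r : ℝ))) ⟨(j:ℝ), hj⟩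
    rw [hGg] at hterm
    have h1 : (∫⁻ ω, ENNReal.ofReal (|ζ ω| ^ ((j:ℕ):ℝ)) ∂P) ^ (1/((j:ℕ):ℝ)) ≤
        ENNReal.ofReal g * ENNReal.ofReal (ψ (j:ℝ)) :=
      (ENNReal.div_le_iff_le_mul (Or.inl (ENNReal.ofReal_pos.2 hψpos).ne')
        (Or.inl ENNReal.ofReal_ne_top)).1 hterm
    have h2 : (∫⁻ ω, ENNReal.ofReal (|ζ ω| ^ ((j:ℕ):ℝ)) ∂P) =
        ((∫⁻ ω, ENNReal.ofReal (|ζ ω| ^ ((j:ℕ):ℝ)) ∂P) ^ (1/((j:ℕ):ℝ))) ^ ((j:ℕ):ℝ) := by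
      rw [← ENNReal.rpow_mul, one_div, inv_mul_cancel₀ (by exact_mod_cast hjpos.ne'),
        ENNReal.rpow_one]
    rw [h2]
    calc ((∫⁻ ω, ENNReal.ofReal (|ζ ω| ^ ((j:ℕ):ℝ)) ∂P) ^ (1/((j:ℕ):ℝ))) ^ ((j:ℕ):ℝ)
        ≤ (ENNReal.ofReal g * ENNReal.ofReal (ψ (j:ℝ))) ^ ((j:ℕ):ℝ) :=
          ENNReal.rpow_le_rpow h1 (by positivity)
      _ = ENNReal.ofReal ((g * ψ (j:ℝ))^(j:ℕ)) := by
          rw [← ENNReal.ofReal_mul hg0,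
            ENNReal.ofReal_rpow_of_nonneg (by positivity) (by positivity),
            Real.rpow_natCast]
  rcases hg0.eq_or_lt with hgz | hgpos
  · -- g = 0 : ζ = 0 a.e.
    have hψ2pos := (hIψ 2 le_rfl).2.1
    have hM2 : (∫⁻ ω, ENNReal.ofReal (|ζ ω| ^ ((2:ℕ):ℝ)) ∂P) = 0 := by
      have := hmom 2 (by norm_num)
      rw [← hgz] at this
      simpa using this
    have hzae : ∀ᵐ ω ∂P, ζ ω = 0 := by
      have hm : Measurable fun ω => ENNReal.ofReal (|ζ ω| ^ ((2:ℕ):ℝ)) := by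
        have : ∀ ω, |ζ ω| ^ ((2:ℕ):ℝ) = |ζ ω| ^ (2:ℕ) := fun ω => Real.rpow_natCast _ 2
        simp only [this]
        exact ((hmeas.abs.pow_const 2)).ennreal_ofReal
      have h0 := (lintegral_eq_zero_iff hm).1 hM2
      filter_upwards [h0] with ω hω
      simp only [Pi.zero_apply, ENNReal.ofReal_eq_zero] at hω
      have h2 : |ζ ω| ^ ((2:ℕ):ℝ) = |ζ ω| ^ (2:ℕ) := Real.rpow_natCast _ 2
      rw [h2] at hω
      have : |ζ ω| ^ (2:ℕ) = 0 := le_antisymm hω (by positivity)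
      have := pow_eq_zero_iff (n := 2) (by norm_num) |>.1 this
      exact abs_eq_zero.1 this
    have hmem : ∀ ε : ℝ≥0, 0 < ε → (ε : ℝ≥0∞) ∈ {t : ℝ≥0∞ | 0 < t ∧ t ≠ ⊤ ∧ ∀ l : ℝ,
        ∫⁻ ω, ENNReal.ofReal (Real.exp (l * ζ ω)) ∂P ≤
          ENNReal.ofReal (Real.exp (φ (t.toReal * l)))} := by
      intro ε hε
      refine ⟨by exact_mod_cast hε, ENNReal.coe_ne_top, fun l => ?_⟩
      have hone : (∫⁻ ω, ENNReal.ofReal (Real.exp (l * ζ ω)) ∂P) = 1 := by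
        have : (fun ω => ENNReal.ofReal (Real.exp (l * ζ ω))) =ᵐ[P] fun _ => 1 := by
          filter_upwards [hzae] with ω hω
          simp [hω]
        rw [lintegral_congr_ae this, lintegral_const, measure_univ, mul_one]
      rw [hone]
      exact ENNReal.one_le_ofReal.2 (Real.one_le_exp (hnonneg _))
    have hB0 : BNorm P φ ζ ≤ 0 := by
      apply ENNReal.le_of_forall_pos_le_add
      intro ε hε _
      rw [zero_add]
      exact sInf_le (hmem ε hε)
    calc BNorm P φ ζ ≤ 0 := hB0
      _ ≤ ENNReal.ofReal C₂ * GNorm P ψ ζ := zero_le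
  · -- main case : 0 < g
    have hC₂g : 0 ≤ C₂ * g := by positivity
    have hj2 : ∀ k : ℕ, (2:ℝ) ≤ (((k+2:ℕ)):ℝ) := fun k => by push_cast; linarith
    have hmem : ENNReal.ofReal (C₂ * g) ∈ {t : ℝ≥0∞ | 0 < t ∧ t ≠ ⊤ ∧ ∀ l : ℝ,
        ∫⁻ ω, ENNReal.ofReal (Real.exp (l * ζ ω)) ∂P ≤
          ENNReal.ofReal (Real.exp (φ (t.toReal * l)))} := by
      refine ⟨ENNReal.ofReal_pos.2 (by positivity), ENNReal.ofReal_ne_top, fun l => ?_⟩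
      rw [ENNReal.toReal_ofReal hC₂g]
      rcases eq_or_ne l 0 with hl0 | hl0
      · simp [hl0, hφ0, lintegral_const, measure_univ]
      · set u := |l| with hudef
        have hu : 0 < u := abs_pos.2 hl0
        set v := g * u with hvdef
        have hv : 0 < v := by positivity
        set a := e * v with hadef
        have ha : 0 < a := by positivity
        set N := φ (2*a) with hNdef
        have hN0 : 0 ≤ N := hnonneg _
        set E := Real.exp (φ a) with hEdef
        have hE1 : 1 ≤ E := Real.one_le_exp (hnonneg _)
        set D : Ω → ℝ := fun ω => Real.exp (u * |ζ ω|) - 1 - u * |ζ ω| with hDdef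
        have hDmeas : Measurable D :=
          ((Real.measurable_exp.comp (hmeas.abs.const_mul u)).sub measurable_const).sub
            (hmeas.abs.const_mul u)
        have hDnonneg : ∀ ω, 0 ≤ D ω := fun ω => by
          have := Real.add_one_le_exp (u * |ζ ω|)
          simp only [hDdef]
          linarith
        set L := ∫⁻ ω, ENNReal.ofReal (D ω) ∂P with hLdef
        -- Step A: series bound on L
        have hTmeas : ∀ k:ℕ, Measurable fun ω =>
            ENNReal.ofReal ((u*|ζ ω|)^(k+2) / (Nat.factorial (k+2):ℝ)) := fun k =>
          (((hmeas.abs.const_mul u).pow_const (k+2)).div_const _).ennreal_ofReal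
        have hLA : L ≤ ∑' k:ℕ, ENNReal.ofReal ((a / invφ (((k+2:ℕ)):ℝ))^(k+2)) := by
          have hpt : ∀ ω, ENNReal.ofReal (D ω) =
              ∑' k:ℕ, ENNReal.ofReal ((u*|ζ ω|)^(k+2) / (Nat.factorial (k+2) : ℝ)) := by
            intro ω
            simp only [hDdef]
            rw [aux_D_tsum (u * |ζ ω|)]
            exact ENNReal.ofReal_tsum_of_nonneg (fun k => by positivity) (aux_summable_shift _)
          have hswap : L = ∑' k:ℕ, ∫⁻ ω,
              ENNReal.ofReal ((u*|ζ ω|)^(k+2) / (Nat.factorial (k+2):ℝ)) ∂P := by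
            rw [hLdef, lintegral_congr hpt, lintegral_tsum (fun k => (hTmeas k).aemeasurable)]
          rw [hswap]
          apply ENNReal.tsum_le_tsum
          intro k
          obtain ⟨hI, hψpos, hψeq⟩ := hIψ (((k+2:ℕ)):ℝ) (hj2 k)
          calc ∫⁻ ω, ENNReal.ofReal ((u*|ζ ω|)^(k+2) / (Nat.factorial (k+2):ℝ)) ∂P
              = ENNReal.ofReal (u^(k+2)/(Nat.factorial (k+2):ℝ)) *
                  ∫⁻ ω, ENNReal.ofReal (|ζ ω|^(k+2:ℕ)) ∂P := by
                rw [← lintegral_const_mul _ ((hmeas.abs.pow_const (k+2)).ennreal_ofReal)]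
                congr 1; funext ω
                rw [← ENNReal.ofReal_mul (by positivity)]
                congr 1; rw [mul_pow]; ring
            _ ≤ ENNReal.ofReal (u^(k+2)/(Nat.factorial (k+2):ℝ)) *
                  ENNReal.ofReal ((g * ψ (((k+2:ℕ)):ℝ))^(k+2)) := by
                apply mul_le_mul_right
                have heq : (∫⁻ ω, ENNReal.ofReal (|ζ ω|^(k+2:ℕ)) ∂P) =
                    ∫⁻ ω, ENNReal.ofReal (|ζ ω|^((((k+2:ℕ))):ℝ)) ∂P := by
                  congr 1; funext ω; rw [Real.rpow_natCast]
                rw [heq]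
                exact hmom (k+2) (hj2 k)
            _ ≤ ENNReal.ofReal ((a / invφ (((k+2:ℕ)):ℝ))^(k+2)) := by
                rw [← ENNReal.ofReal_mul (by positivity)]
                apply ENNReal.ofReal_le_ofReal
                have hat := aux_term (u := u) (g := g) (I := invφ (((k+2:ℕ)):ℝ))
                  (ψj := ψ (((k+2:ℕ)):ℝ)) (k+2) (by omega) hu.le hg0 hI hψeq
                calc u^(k+2)/(Nat.factorial (k+2):ℝ) * (g * ψ (((k+2:ℕ)):ℝ))^(k+2)
                    = u^(k+2) * (g * ψ (((k+2:ℕ)):ℝ))^(k+2) / (Nat.factorial (k+2):ℝ) := by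
                      ring
                  _ ≤ (e * (g * u) / invφ (((k+2:ℕ)):ℝ))^(k+2) := hat
                  _ = (a / invφ (((k+2:ℕ)):ℝ))^(k+2) := by rw [hadef, hvdef]
        -- unconditional (large-style) bound
        have hf : ∀ k:ℕ, ENNReal.ofReal ((a / invφ (((k+2:ℕ)):ℝ))^(k+2)) ≤
            (if ((k:ℝ) + 2 < N) then ENNReal.ofReal E else 0) +
              ENNReal.ofReal ((1/2:ℝ)^(k+2)) := by
          intro k
          obtain ⟨hI, _, _⟩ := hIψ (((k+2:ℕ)):ℝ) (hj2 k)
          by_cases hcase : ((k:ℝ) + 2 < N)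
          · rw [if_pos hcase]
            have hφI : φ (invφ (((k+2:ℕ)):ℝ)) = (((k+2:ℕ)):ℝ) :=
              (hinv2 _ (by linarith [hj2 k])).2
            have hTE : (a / invφ (((k+2:ℕ)):ℝ))^(k+2) ≤ E :=
              aux_T_le_E hconv hφ0 hnonneg (k+2) ha hI hφI
            calc ENNReal.ofReal ((a / invφ (((k+2:ℕ)):ℝ))^(k+2))
                ≤ ENNReal.ofReal E := ENNReal.ofReal_le_ofReal hTE
              _ ≤ _ := le_self_add
          · rw [if_neg hcase, zero_add]
            push_neg at hcase
            have h2a : invφ N ≤ invφ (((k+2:ℕ)):ℝ) :=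
              hinvmono _ _ hN0 (by push_cast; linarith)
            have hNval : invφ N = 2*a := by rw [hNdef]; exact hinv1 _ (by positivity)
            have h3 : 2*a ≤ invφ (((k+2:ℕ)):ℝ) := by rw [← hNval]; exact h2a
            have hbase : a / invφ (((k+2:ℕ)):ℝ) ≤ 1/2 := by
              rw [div_le_div_iff₀ hI (by norm_num)]
              linarith
            exact ENNReal.ofReal_le_ofReal (pow_le_pow_left₀ (by positivity) hbase _)
        have hLbig : L ≤ ENNReal.ofReal (N+1) * ENNReal.ofReal E + 2 :=
          hLA.trans (aux_tsum_le hN0 (le_trans zero_le_one hE1) _ hf)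
        have hLne : L ≠ ⊤ := by
          refine (lt_of_le_of_lt hLbig ?_).ne
          exact ENNReal.add_lt_top.2 ⟨ENNReal.mul_lt_top ENNReal.ofReal_lt_top
            ENNReal.ofReal_lt_top, ENNReal.ofNat_lt_top⟩
        -- integrability
        have habs_int : Integrable (fun ω => |ζ ω|) P := hint.abs
        have habsfin : (∫⁻ ω, ENNReal.ofReal (|ζ ω|) ∂P) < ⊤ := by
          have h := habs_int.hasFiniteIntegral
          rwa [hasFiniteIntegral_iff_ofReal (ae_of_all _ fun ω => abs_nonneg _)] at h
        have hXmeas : Measurable fun ω => Real.exp (u * |ζ ω|) :=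
          Real.measurable_exp.comp (hmeas.abs.const_mul u)
        have hXfin : (∫⁻ ω, ENNReal.ofReal (Real.exp (u * |ζ ω|)) ∂P) ≠ ⊤ := by
          have hexp_eq : ∀ ω, Real.exp (u*|ζ ω|) = 1 + u*|ζ ω| + D ω := fun ω => by
            simp only [hDdef]; ring
          have hptX : ∀ ω, ENNReal.ofReal (Real.exp (u*|ζ ω|)) ≤
              (1 + ENNReal.ofReal u * ENNReal.ofReal (|ζ ω|)) + ENNReal.ofReal (D ω) := by
            intro ω
            rw [hexp_eq ω]
            calc ENNReal.ofReal (1 + u*|ζ ω| + D ω)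
                ≤ ENNReal.ofReal (1 + u*|ζ ω|) + ENNReal.ofReal (D ω) := ENNReal.ofReal_add_le
              _ ≤ (ENNReal.ofReal 1 + ENNReal.ofReal (u*|ζ ω|)) + ENNReal.ofReal (D ω) :=
                  add_le_add_left ENNReal.ofReal_add_le _
              _ = (1 + ENNReal.ofReal u * ENNReal.ofReal (|ζ ω|)) + ENNReal.ofReal (D ω) := by
                  rw [ENNReal.ofReal_one, ENNReal.ofReal_mul hu.le]
          have hle : (∫⁻ ω, ENNReal.ofReal (Real.exp (u*|ζ ω|)) ∂P) ≤
              ∫⁻ ω, ((1 + ENNReal.ofReal u * ENNReal.ofReal (|ζ ω|)) + ENNReal.ofReal (D ω)) ∂P :=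
            lintegral_mono hptX
          have hsplit : (∫⁻ ω, ((1 + ENNReal.ofReal u * ENNReal.ofReal (|ζ ω|)) +
              ENNReal.ofReal (D ω)) ∂P) =
              (∫⁻ ω, (1 + ENNReal.ofReal u * ENNReal.ofReal (|ζ ω|)) ∂P) + L := by
            rw [hLdef]
            exact lintegral_add_left (measurable_const.add
              ((hmeas.abs.ennreal_ofReal).const_mul _)) _
          have hsplit2 : (∫⁻ ω, (1 + ENNReal.ofReal u * ENNReal.ofReal (|ζ ω|)) ∂P) =
              1 + ENNReal.ofReal u * ∫⁻ ω, ENNReal.ofReal (|ζ ω|) ∂P := by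
            rw [lintegral_add_left measurable_const, lintegral_const, measure_univ, mul_one,
              lintegral_const_mul _ (hmeas.abs.ennreal_ofReal)]
          refine ne_top_of_le_ne_top ?_ (hle.trans_eq (by rw [hsplit, hsplit2]))
          refine (ENNReal.add_lt_top.2 ⟨ENNReal.add_lt_top.2 ⟨ENNReal.one_lt_top, ?_⟩,
            lt_top_iff_ne_top.2 hLne⟩).ne
          exact ENNReal.mul_lt_top ENNReal.ofReal_lt_top habsfin
        have hX : Integrable (fun ω => Real.exp (u * |ζ ω|)) P :=
          ⟨hXmeas.aestronglyMeasurable,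
            (hasFiniteIntegral_iff_ofReal (ae_of_all _ fun ω => Real.exp_nonneg _)).2
              (lt_top_iff_ne_top.2 hXfin)⟩
        have hexp_int : Integrable (fun ω => Real.exp (l * ζ ω)) P := by
          apply hX.mono' ((hmeas.const_mul l).exp).aestronglyMeasurable
          apply ae_of_all
          intro ω
          simp only [Real.norm_eq_abs, Real.abs_exp]
          apply Real.exp_le_exp.2
          calc l * ζ ω ≤ |l * ζ ω| := le_abs_self _
            _ = u * |ζ ω| := by rw [abs_mul]
        have hD_int : Integrable D P := by
          rw [hDdef]
          exact (hX.sub (integrable_const 1)).sub (habs_int.const_mul u)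
        -- real-side estimate
        have hIle : ∫ ω, Real.exp (l * ζ ω) ∂P ≤ 1 + L.toReal := by
          have hptle : ∀ ω, Real.exp (l * ζ ω) ≤ 1 + l * ζ ω + D ω := by
            intro ω
            have h := aux_exp_le (l * ζ ω)
            rw [abs_mul] at h
            rw [← hudef] at h
            simpa [hDdef] using h
          calc ∫ ω, Real.exp (l * ζ ω) ∂P
              ≤ ∫ ω, (1 + l * ζ ω + D ω) ∂P :=
                integral_mono hexp_int
                  (((integrable_const 1).add (hint.const_mul l)).add hD_int)
                  hptle
            _ = (∫ ω, (1 + l * ζ ω) ∂P) + ∫ ω, D ω ∂P :=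
                integral_add ((integrable_const 1).add (hint.const_mul l)) hD_int
            _ = 1 + l * (∫ ω, ζ ω ∂P) + ∫ ω, D ω ∂P := by
                rw [integral_add (integrable_const 1) (hint.const_mul l), integral_const,
                  probReal_univ, integral_const_mul]
                simp
            _ = 1 + ∫ ω, D ω ∂P := by rw [hcent]; ring
            _ = 1 + L.toReal := by
                rw [hLdef, integral_eq_lintegral_of_nonneg_ae (ae_of_all _ hDnonneg)
                  hDmeas.aestronglyMeasurable]
        have hφsym : φ (C₂ * g * l) = φ (C₂ * v) := by
          rcases abs_cases l with ⟨h1, _⟩ | ⟨h1, _⟩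
          · have harg : C₂ * g * l = C₂ * v := by rw [hvdef, hudef, h1]; ring
            rw [harg]
          · have harg : C₂ * g * l = -(C₂ * v) := by rw [hvdef, hudef, h1]; ring
            rw [harg, heven]
        -- the key comparison
        have hkey : 1 + L.toReal ≤ Real.exp (φ (C₂ * v)) := by
          rcases le_or_gt v v₀ with hreg | hreg
          · -- small regime
            set q := e * v / b with hqdef
            have hq0 : 0 ≤ q := by positivity
            have hq2 : q ≤ 1/2 := by
              rw [hqdef, div_le_div_iff₀ hb (by norm_num)]
              have hvb : v ≤ b/(2*e) := le_trans hreg (min_le_left _ _)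
              rw [le_div_iff₀ (by positivity)] at hvb
              nlinarith
            have hsmall : L ≤ ENNReal.ofReal (2*q^2) := by
              refine hLA.trans (le_trans (ENNReal.tsum_le_tsum (fun k => ?_))
                (aux_geom_tail hq0 hq2))
              apply ENNReal.ofReal_le_ofReal
              obtain ⟨hI, _, _⟩ := hIψ (((k+2:ℕ)):ℝ) (hj2 k)
              apply pow_le_pow_left₀ (by positivity)
              have hmono2 : b ≤ invφ (((k+2:ℕ)):ℝ) := by
                rw [hbdef]
                exact hinvmono 2 _ (by norm_num) (hj2 k)
              rw [hqdef, hadef, div_le_div_iff₀ hI hb]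
              have : e * v * b ≤ e * v * invφ (((k+2:ℕ)):ℝ) :=
                mul_le_mul_of_nonneg_left hmono2 (by positivity)
              linarith
            have hLt : L.toReal ≤ 2*q^2 :=
              ENNReal.toReal_le_of_le_ofReal (by positivity) hsmall
            have hCsv : Cs * v ≤ 1 := by
              have h1 : v ≤ 1/Cs := le_trans hreg (min_le_right _ _)
              rw [le_div_iff₀ hCs] at h1
              linarith
            have hlow2 : Cm * (Cs*v)^2 ≤ φ (Cs * v) :=
              hlow (Cs*v) (by rw [abs_of_nonneg (by positivity)]; exact hCsv)
            have hCs2 : Cs^2 = 2*(e/b)^2/Cm := Real.sq_sqrt (by positivity)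
            have h2q : 2*q^2 ≤ φ (C₂ * v) := by
              have hm : φ (Cs * v) ≤ φ (C₂ * v) :=
                phi_mono heven hconv (by positivity)
                  (mul_le_mul_of_nonneg_right (le_max_left _ _) hv.le)
              have hcomp : Cm * (Cs*v)^2 = 2*q^2 := by
                rw [hqdef]
                calc Cm * (Cs*v)^2 = Cm * Cs^2 * v^2 := by ring
                  _ = Cm * (2*(e/b)^2/Cm) * v^2 := by rw [hCs2]
                  _ = 2*(e*v/b)^2 := by field_simp
              linarith
            calc 1 + L.toReal ≤ 1 + 2*q^2 := by linarith
              _ ≤ Real.exp (2*q^2) := by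
                  have := Real.add_one_le_exp (2*q^2); linarith
              _ ≤ Real.exp (φ (C₂ * v)) := Real.exp_le_exp.2 h2q
          · -- large regime
            have hLt : L.toReal ≤ (N+1)*E + 2 := by
              apply ENNReal.toReal_le_of_le_ofReal (by positivity)
              refine hLbig.trans_eq ?_
              rw [← ENNReal.ofReal_mul (by positivity), ← ENNReal.ofReal_ofNat 2,
                ← ENNReal.ofReal_add (by positivity) (by norm_num)]
            have hNP0 : P0 ≤ N := by
              rw [hP0def, hNdef, hadef]
              apply phi_mono heven hconv (by positivity)
              nlinarith [hreg.le]
            have hphiav : φ a ≤ N := phi_mono heven hconv ha.le (by linarith)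
            have hfin : 2*N + 4 ≤ φ (C₂*v) := by
              have hm : φ (Cl * v) ≤ φ (C₂ * v) :=
                phi_mono heven hconv (by positivity)
                  (mul_le_mul_of_nonneg_right (le_max_right _ _) hv.le)
              have h1c : (1:ℝ) ≤ 2 + 4/P0 := by
                have h40 : (0:ℝ) < 4/P0 := by positivity
                linarith
              have hsup : (2 + 4/P0) * φ (2*e*v) ≤ φ ((2 + 4/P0) * (2*e*v)) :=
                phi_superhom hconv hφ0 h1c (by positivity)
              have harg2 : (2 + 4/P0) * (2*e*v) = Cl * v := by rw [hCldef]; ring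
              have hNeq : φ (2*e*v) = N := by rw [hNdef, hadef]; ring_nf
              have h4 : 4 ≤ (4/P0) * N := by
                rw [div_mul_eq_mul_div, le_div_iff₀ hP0]
                nlinarith [hNP0]
              calc 2*N + 4 ≤ 2*N + (4/P0)*N := by linarith
                _ = (2 + 4/P0) * N := by ring
                _ = (2 + 4/P0) * φ (2*e*v) := by rw [hNeq]
                _ ≤ φ ((2 + 4/P0) * (2*e*v)) := hsup
                _ = φ (Cl * v) := by rw [harg2]
                _ ≤ φ (C₂ * v) := hm
            have hN4 : N + 4 ≤ Real.exp (N+4) := by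
              have h := Real.add_one_le_exp (N+3)
              have h2 : Real.exp (N+3) ≤ Real.exp (N+4) := Real.exp_le_exp.2 (by linarith)
              linarith
            calc 1 + L.toReal ≤ (N+1)*E + 3 := by linarith
              _ ≤ (N+4)*E := by nlinarith
              _ ≤ Real.exp (N+4) * E := mul_le_mul_of_nonneg_right hN4 (by linarith)
              _ = Real.exp (N + 4 + φ a) := by rw [hEdef, ← Real.exp_add]
              _ ≤ Real.exp (φ (C₂*v)) := Real.exp_le_exp.2 (by linarith)
        have hnn : 0 ≤ᵐ[P] fun ω => Real.exp (l * ζ ω) := ae_of_all _ fun ω => Real.exp_nonneg _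
        calc ∫⁻ ω, ENNReal.ofReal (Real.exp (l * ζ ω)) ∂P
            = ENNReal.ofReal (∫ ω, Real.exp (l * ζ ω) ∂P) :=
              (ofReal_integral_eq_lintegral_ofReal hexp_int hnn).symm
          _ ≤ ENNReal.ofReal (Real.exp (φ (C₂ * g * l))) := by
              rw [hφsym]
              exact ENNReal.ofReal_le_ofReal (le_trans hIle hkey)
    calc BNorm P φ ζ ≤ ENNReal.ofReal (C₂ * g) := sInf_le hmem
      _ = ENNReal.ofReal C₂ * ENNReal.ofReal g := ENNReal.ofReal_mul hC₂.le
      _ = ENNReal.ofReal C₂ * GNorm P ψ ζ := by rw [hGg]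

/-- For `φ ∈ Φ` finite on `ℝ` and `ψ(r) = r / φ⁻¹(r)`, there are constants
`C₁(φ), C₂(φ) ∈ (0,∞)` with `‖ζ‖G(ψ) ≤ C₁ ‖ζ‖B(φ)` and `‖ζ‖B(φ) ≤ C₂ ‖ζ‖G(ψ)` for every
centered random variable `ζ`; in particular the spaces `B(φ)` and `G(ψ)` coincide and their
norms are equivalent. -/
theorem bphi_gpsi_norm_equivalence
    (φ : ℝ → ℝ) (hφ : IsPhiClass φ)
    (invφ : ℝ → ℝ)
    (hinvφ : (∀ x : ℝ, 0 ≤ x → invφ (φ x) = x) ∧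
      (∀ y : ℝ, 0 ≤ y → 0 ≤ invφ y ∧ φ (invφ y) = y))
    (ψ : ℝ → ℝ) (hψ : ∀ r : ℝ, 2 ≤ r → ψ r = r / invφ r) :
    ∃ C₁ C₂ : ℝ, 0 < C₁ ∧ 0 < C₂ ∧
      ∀ (Ω : Type) (_ : MeasurableSpace Ω) (P : Measure Ω), IsProbabilityMeasure P →
        ∀ ζ : Ω → ℝ, Measurable ζ → Integrable ζ P → (∫ ω, ζ ω ∂P) = 0 →
          GNorm P ψ ζ ≤ ENNReal.ofReal C₁ * BNorm P φ ζ ∧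
          BNorm P φ ζ ≤ ENNReal.ofReal C₂ * GNorm P ψ ζ := by
  obtain ⟨heven, hconv, hcont, hnonneg, hzero, ⟨Cm, Cp, hCm, hCmp, hbound⟩, hsup⟩ := hφ
  obtain ⟨hinv1, hinv2⟩ := hinvφ
  obtain ⟨C₂, hC₂, hC₂all⟩ := dir2 heven hconv hnonneg hzero hCm
    (fun x hx => (hbound x hx).1) hinv1 hinv2 hψ
  refine ⟨2, C₂, two_pos, hC₂, ?_⟩
  intro Ω mΩ P hP ζ hmeas hint hcent
  haveI := hP
  exact ⟨dir1 heven hinv2 hzero hψ P ζ hmeas, hC₂all Ω mΩ P hP ζ hmeas hint hcent⟩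
end

section
/- Let φ ∈ Φ with φ finite on all of ℝ, and define ψ(r) = r/φ^{−1}(r) for r ≥ 2, where φ^{−1} is the inverse of φ on [0,∞). Then there exists a constant C₃ = C₃(φ) ∈ (0,∞) such that for every (not necessarily centered) random variable ζ with 0 < ||ζ||G(ψ) < ∞ and all u > 0: P(|ζ| > u) ≤ 2 exp(−φ*(u/(C₃ ||ζ||G(ψ)))). -/
open MeasureTheory Filter Real ENNReal

/-- The Young–Fenchel (Legendre) conjugate `φ*(u) = sup_{λ} (λu − φ(λ))`. -/
noncomputable def phiStar (φ : ℝ → ℝ) (u : ℝ) : ℝ := ⨆ l : ℝ, (l * u - φ l)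

/-- For `φ ∈ Φ` finite on `ℝ` and `ψ(r) = r / φ⁻¹(r)`, there is a constant
`C₃ = C₃(φ) ∈ (0,∞)` such that every random variable `ζ` with `0 < ‖ζ‖G(ψ) < ∞` satisfies
the tail estimate `P(|ζ| > u) ≤ 2 exp(−φ*(u / (C₃ ‖ζ‖G(ψ))))` for all `u > 0`. -/
theorem gpsi_tail_estimate
    (φ : ℝ → ℝ) (hφ : IsPhiClass φ)
    (invφ : ℝ → ℝ)
    (hinvφ : (∀ x : ℝ, 0 ≤ x → invφ (φ x) = x) ∧
      (∀ y : ℝ, 0 ≤ y → 0 ≤ invφ y ∧ φ (invφ y) = y))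
    (ψ : ℝ → ℝ) (hψ : ∀ r : ℝ, 2 ≤ r → ψ r = r / invφ r) :
    ∃ C₃ : ℝ, 0 < C₃ ∧
      ∀ (Ω : Type) (_ : MeasurableSpace Ω) (P : Measure Ω), IsProbabilityMeasure P →
        ∀ ζ : Ω → ℝ, Measurable ζ →
          0 < GNorm P ψ ζ → GNorm P ψ ζ ≠ ⊤ →
          ∀ u : ℝ, 0 < u →
            (P {ω | u < |ζ ω|}).toReal ≤
              2 * Real.exp (-(phiStar φ (u / (C₃ * (GNorm P ψ ζ).toReal)))) := by
  obtain ⟨hinv1, hinv2⟩ := hinvφ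
  obtain ⟨heven, hconv, hcont, hnn, hzero, ⟨Cm, Cp, hCm, hCmp, hbd⟩, htend⟩ := hφ
  have hφ0 : φ 0 = 0 := (hzero 0).mpr rfl
  -- strict monotonicity of the ratio φ(x)/x
  have hratio : ∀ a b : ℝ, 0 < a → a < b → φ a / a < φ b / b := by
    intro a b ha hab
    have hb : 0 < b := ha.trans hab
    have hkey : φ a < a / b * φ b := by
      have h := hconv.2 (Set.mem_univ (0:ℝ)) (Set.mem_univ b) hb.ne
        (show 0 < (b - a)/b from div_pos (by linarith) hb) (show 0 < a/b by positivity)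
        (by field_simp; ring)
      simp only [smul_eq_mul, mul_zero, zero_add, hφ0] at h
      rw [div_mul_cancel₀ _ hb.ne'] at h
      linarith
    rw [div_lt_div_iff₀ ha hb]
    have h2 := mul_lt_mul_of_pos_right hkey hb
    have h3 : a / b * φ b * b = φ b * a := by field_simp
    linarith
  have hmono : ∀ a b : ℝ, 0 ≤ a → a ≤ b → φ a ≤ φ b := by
    intro a b ha hab
    rcases eq_or_lt_of_le hab with rfl | hab'
    · exact le_rfl
    rcases eq_or_lt_of_le ha with rfl | ha'
    · rw [hφ0]; exact hnn b
    · have h := hratio a b ha' hab'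
      have hb : 0 < b := ha'.trans hab'
      rw [div_lt_div_iff₀ ha' hb] at h
      nlinarith [mul_le_mul_of_nonneg_left hab'.le (hnn b)]
  -- key upper bound on phiStar
  have hstar : ∀ v s : ℝ, 0 < s → 0 ≤ v → v ≤ φ s / s → phiStar φ v ≤ φ s := by
    intro v s hs hv hvs
    apply ciSup_le
    intro l
    rcases le_or_gt l 0 with hl | hl
    · have h1 : l * v ≤ 0 := mul_nonpos_of_nonpos_of_nonneg hl hv
      linarith [hnn l, hnn s]
    rcases le_or_gt l s with hls | hls
    · have h1 : l * v ≤ s * (φ s / s) :=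
        mul_le_mul hls hvs hv hs.le
      rw [mul_div_cancel₀ _ hs.ne'] at h1
      linarith [hnn l]
    · have h1 : v ≤ φ l / l := hvs.trans (hratio s l hs hls).le
      have h2 : v * l ≤ φ l := (le_div_iff₀ hl).mp h1
      have h3 : φ s ≥ 0 := hnn s
      nlinarith
  -- IVT: the ratio takes every positive value
  have hCp : 0 < Cp := hCm.trans_le hCmp
  have hivt : ∀ t : ℝ, 0 < t → ∃ s : ℝ, 0 < s ∧ φ s / s = t := by
    intro t ht
    set a := min 1 (t / Cp) with hadef
    have hapos : 0 < a := lt_min one_pos (by positivity)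
    have ha1 : a ≤ 1 := min_le_left _ _
    have hga : φ a / a ≤ t := by
      have hb := (hbd a (by rw [abs_of_pos hapos]; exact ha1)).2
      have h1 : φ a / a ≤ Cp * a := by
        rw [div_le_iff₀ hapos]
        calc φ a ≤ Cp * a ^ 2 := hb
        _ = Cp * a * a := by ring
      calc φ a / a ≤ Cp * a := h1
      _ ≤ Cp * (t / Cp) := by
          exact mul_le_mul_of_nonneg_left (min_le_right _ _) hCp.le
      _ = t := by field_simp
    obtain ⟨b, hb1, hb2⟩ := ((htend.eventually_ge_atTop t).and (eventually_ge_atTop a)).exists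
    have hab : a ≤ b := hb2
    have hcontg : ContinuousOn (fun s : ℝ => φ s / s) (Set.Icc a b) :=
      ContinuousOn.div hcont.continuousOn continuousOn_id
        (fun x hx => (hapos.trans_le hx.1).ne')
    have hmem : t ∈ Set.Icc ((fun s : ℝ => φ s / s) a) ((fun s : ℝ => φ s / s) b) := ⟨hga, hb1⟩
    obtain ⟨s, hs, hseq⟩ := intermediate_value_Icc hab hcontg hmem
    exact ⟨s, hapos.trans_le hs.1, hseq⟩
  -- special points
  have hs₂ := hinv2 2 (by norm_num)
  set s₂ := invφ 2 with hs₂def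
  have hφs₂ : φ s₂ = 2 := hs₂.2
  have hs₂pos : 0 < s₂ := by
    rcases eq_or_lt_of_le hs₂.1 with h | h
    · exfalso; rw [← h, hφ0] at hφs₂; norm_num at hφs₂
    · exact h
  have hlog2 : (0:ℝ) < Real.log 2 := Real.log_pos (by norm_num)
  have hsL := hinv2 (Real.log 2) hlog2.le
  set sL := invφ (Real.log 2) with hsLdef
  have hφsL : φ sL = Real.log 2 := hsL.2
  have hsLpos : 0 < sL := by
    rcases eq_or_lt_of_le hsL.1 with h | h
    · exfalso; rw [← h, hφ0] at hφsL; linarith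
    · exact h
  set v₀ := Real.log 2 / sL with hv₀def
  have hv₀pos : 0 < v₀ := by positivity
  set K := max 1 (2 / (s₂ * v₀)) with hKdef
  have hK1 : (1:ℝ) ≤ K := le_max_left _ _
  have hKpos : 0 < K := lt_of_lt_of_le one_pos hK1
  refine ⟨Real.exp 1 * K, mul_pos (Real.exp_pos 1) hKpos, ?_⟩
  intro Ω _ P hP ζ hζ hGpos hGtop u hu
  haveI := hP
  set G := GNorm P ψ ζ with hGdef
  set N := G.toReal with hNdef
  have hNpos : 0 < N := ENNReal.toReal_pos hGpos.ne' hGtop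
  set v := u / (Real.exp 1 * K * N) with hvdef
  have hvpos : 0 < v := by
    have := Real.exp_pos 1
    positivity
  by_cases hcase : v < 2 / (K * s₂)
  · -- small u case : tail bound is ≥ 1
    have hvle : v ≤ v₀ := by
      have hK2 : 2 / (s₂ * v₀) ≤ K := le_max_right _ _
      have h1 : 2 / (K * s₂) ≤ v₀ := by
        rw [div_le_iff₀ (by positivity)]
        rw [div_le_iff₀ (by positivity)] at hK2
        nlinarith
      linarith
    have hstarle : phiStar φ v ≤ Real.log 2 := by
      have h := hstar v sL hsLpos hvpos.le (by rw [hφsL]; exact hvle)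
      rwa [hφsL] at h
    have hP1 : (P {ω | u < |ζ ω|}).toReal ≤ 1 := by
      calc (P {ω | u < |ζ ω|}).toReal ≤ (1 : ℝ≥0∞).toReal :=
        ENNReal.toReal_mono one_ne_top prob_le_one
      _ = 1 := by simp
    have hexp : Real.exp (-(Real.log 2)) = 1/2 := by
      rw [Real.exp_neg, Real.exp_log (by norm_num : (0:ℝ) < 2)]; norm_num
    have h2 : Real.exp (-(Real.log 2)) ≤ Real.exp (-(phiStar φ v)) :=
      Real.exp_le_exp.mpr (by linarith)
    calc (P {ω | u < |ζ ω|}).toReal ≤ 1 := hP1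
    _ ≤ 2 * Real.exp (-(phiStar φ v)) := by
        rw [hexp] at h2; linarith
  · -- main case
    push_neg at hcase
    obtain ⟨s, hspos, hsprop⟩ := hivt (K * v) (by positivity)
    have hss₂ : s₂ ≤ s := by
      by_contra h
      push_neg at h
      have h1 : φ s / s < φ s₂ / s₂ := hratio s s₂ hspos h
      rw [hsprop, hφs₂] at h1
      have h2 := mul_le_mul_of_nonneg_left hcase hKpos.le
      have h3 : K * (2 / (K * s₂)) = 2 / s₂ := by
        field_simp
      rw [h3] at h2
      linarith
    set r := φ s with hrdef
    have hr2 : (2:ℝ) ≤ r := by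
      rw [← hφs₂]; exact hmono s₂ s hs₂pos.le hss₂
    have hrpos : (0:ℝ) < r := lt_of_lt_of_le two_pos hr2
    have hψr : ψ r = K * v := by
      rw [hψ r hr2, hrdef, hinv1 s hspos.le, hsprop]
    have hψrpos : 0 < ψ r := by rw [hψr]; positivity
    -- moment bound from GNorm
    set I := ∫⁻ ω, ENNReal.ofReal (|ζ ω| ^ r) ∂P with hIdef
    have hle1 : I ^ (1/r) / ENNReal.ofReal (ψ r) ≤ G := by
      exact le_iSup (fun p : {r : ℝ // 2 ≤ r} =>
        (∫⁻ ω, ENNReal.ofReal (|ζ ω| ^ (p : ℝ)) ∂P) ^ (1 / (p : ℝ)) /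
          ENNReal.ofReal (ψ (p : ℝ))) ⟨r, hr2⟩
    have hI_le : I ≤ (G * ENNReal.ofReal (ψ r)) ^ r := by
      have h1 : I ^ (1/r) ≤ G * ENNReal.ofReal (ψ r) := by
        rw [ENNReal.div_le_iff_le_mul
          (Or.inl (by simp only [ne_eq, ENNReal.ofReal_eq_zero, not_le]; exact hψrpos))
          (Or.inl ENNReal.ofReal_ne_top)] at hle1
        exact hle1
      calc I = (I ^ (1/r)) ^ r := by
            rw [← ENNReal.rpow_mul, one_div, inv_mul_cancel₀ hrpos.ne', ENNReal.rpow_one]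
      _ ≤ (G * ENNReal.ofReal (ψ r)) ^ r := ENNReal.rpow_le_rpow h1 hrpos.le
    -- Markov
    have hmeas : Measurable fun ω => ENNReal.ofReal (|ζ ω| ^ r) :=
      ((hζ.abs.pow measurable_const).ennreal_ofReal : Measurable fun ω => ENNReal.ofReal (|ζ ω| ^ r))
    have hεne0 : ENNReal.ofReal (u ^ r) ≠ 0 := by
      simp only [ne_eq, ENNReal.ofReal_eq_zero, not_le]
      exact Real.rpow_pos_of_pos hu r
    have hsub : {ω | u < |ζ ω|} ⊆ {ω | ENNReal.ofReal (u ^ r) ≤ ENNReal.ofReal (|ζ ω| ^ r)} := by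
      intro ω hω
      exact ENNReal.ofReal_le_ofReal (Real.rpow_le_rpow hu.le (le_of_lt hω) hrpos.le)
    have hmarkov : ENNReal.ofReal (u ^ r) * P {ω | u < |ζ ω|} ≤ I := by
      calc ENNReal.ofReal (u ^ r) * P {ω | u < |ζ ω|}
          ≤ ENNReal.ofReal (u ^ r) *
            P {ω | ENNReal.ofReal (u ^ r) ≤ ENNReal.ofReal (|ζ ω| ^ r)} :=
            mul_le_mul_right (measure_mono hsub) _
      _ ≤ I := mul_meas_ge_le_lintegral₀ hmeas.aemeasurable _
    have hPle : P {ω | u < |ζ ω|} ≤ (G * ENNReal.ofReal (ψ r)) ^ r / ENNReal.ofReal (u ^ r) := by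
      rw [ENNReal.le_div_iff_mul_le (Or.inl hεne0) (Or.inl ENNReal.ofReal_ne_top)]
      calc P {ω | u < |ζ ω|} * ENNReal.ofReal (u ^ r)
          = ENNReal.ofReal (u ^ r) * P {ω | u < |ζ ω|} := mul_comm _ _
      _ ≤ I := hmarkov
      _ ≤ _ := hI_le
    have hnumtop : (G * ENNReal.ofReal (ψ r)) ^ r ≠ ⊤ :=
      ENNReal.rpow_ne_top_of_nonneg hrpos.le (ENNReal.mul_ne_top hGtop ENNReal.ofReal_ne_top)
    have hfin : (G * ENNReal.ofReal (ψ r)) ^ r / ENNReal.ofReal (u ^ r) ≠ ⊤ :=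
      (ENNReal.div_lt_top hnumtop hεne0).ne
    have hcalc : ((G * ENNReal.ofReal (ψ r)) ^ r / ENNReal.ofReal (u ^ r)).toReal
        = (N * ψ r) ^ r / u ^ r := by
      rw [ENNReal.toReal_div, ← ENNReal.toReal_rpow, ENNReal.toReal_mul,
        ENNReal.toReal_ofReal hψrpos.le, ENNReal.toReal_ofReal (Real.rpow_nonneg hu.le r)]
    have hstep : (P {ω | u < |ζ ω|}).toReal ≤ (N * ψ r) ^ r / u ^ r := by
      rw [← hcalc]
      exact ENNReal.toReal_mono hfin hPle
    have hval : N * ψ r / u = Real.exp (-1) := by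
      rw [hψr, hvdef, Real.exp_neg]
      have he : Real.exp 1 ≠ 0 := (Real.exp_pos 1).ne'
      field_simp
    have hfinal : (N * ψ r) ^ r / u ^ r = Real.exp (-r) := by
      rw [← Real.div_rpow (by positivity) hu.le, hval,
        Real.rpow_def_of_pos (Real.exp_pos _), Real.log_exp]
      ring_nf
    have hφstar : phiStar φ v ≤ r := by
      refine hstar v s hspos hvpos.le ?_
      rw [hsprop]
      exact le_mul_of_one_le_left hvpos.le hK1
    calc (P {ω | u < |ζ ω|}).toReal ≤ (N * ψ r) ^ r / u ^ r := hstep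
    _ = Real.exp (-r) := hfinal
    _ ≤ Real.exp (-(phiStar φ v)) := Real.exp_le_exp.mpr (by linarith)
    _ ≤ 2 * Real.exp (-(phiStar φ v)) := by linarith [Real.exp_pos (-(phiStar φ v))]
end

section
/- (Entropy bound for the maximum.) Let φ ∈ Φ with φ finite on all of ℝ, let (T,d) be a compact metric space, and let ξ = {ξ(t), t ∈ T} be a separable centered stochastic process with continuous sample paths such that sup_{t∈T} ||ξ(t)||B(φ) ≤ 1 and ||ξ(t) − ξ(s)||B(φ) ≤ d(s,t) for all s,t ∈ T. Let H(T,d,ε) be the metric entropy of (T,d). If Σ_{n=1}^∞ 2^{−n} H(T,d,2^{−n}) < ∞, then the random variable β = sup_{t∈T} ξ(t) satisfies: there exists a constant C ∈ (0,∞) such that P(|β| > u) ≤ 2 exp(−φ*(u/C)) for all u ≥ 1. -/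
open MeasureTheory Filter Real ENNReal

/-- The minimal number of closed balls of radius `ε` needed to cover a metric space `T`. -/
noncomputable def coveringNumber (T : Type*) [MetricSpace T] (ε : ℝ) : ℕ :=
  sInf {n : ℕ | ∃ s : Finset T, s.card = n ∧ ∀ x : T, ∃ c ∈ s, dist x c ≤ ε}

/-- The metric entropy `H(T,d,ε)`: natural logarithm of the covering number. -/
noncomputable def metricEntropy (T : Type*) [MetricSpace T] (ε : ℝ) : ℝ :=
  Real.log (coveringNumber T ε)


section PhiLemmas
variable {φ : ℝ → ℝ}

lemma phi_monoOn (hconv : ConvexOn ℝ Set.univ φ) (h0 : φ 0 = 0) (hnn : ∀ x, 0 ≤ φ x) :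
    ∀ a b : ℝ, 0 ≤ a → a ≤ b → φ a ≤ φ b := by
  intro a b ha hab
  rcases eq_or_lt_of_le (ha.trans hab) with hb | hb
  · have : a = 0 := le_antisymm (hab.trans hb.symm.le) ha
    simp [this, ← hb, h0]
  · have ht : a / b ∈ Set.Icc (0:ℝ) 1 := ⟨div_nonneg ha hb.le, div_le_one_of_le₀ hab hb.le⟩
    have h := hconv.2 (Set.mem_univ 0) (Set.mem_univ b) (by linarith [ht.2] : (0:ℝ) ≤ 1 - a/b)
      ht.1 (by ring)
    simp only [smul_eq_mul, mul_zero, zero_add, h0, mul_zero] at h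
    rw [div_mul_cancel₀ a hb.ne'] at h
    calc φ a ≤ a/b * φ b := h
      _ ≤ 1 * φ b := mul_le_mul_of_nonneg_right ht.2 (hnn b)
      _ = φ b := one_mul _

lemma phi_eq_abs (heven : ∀ x, φ (-x) = φ x) (x : ℝ) : φ x = φ |x| := by
  rcases abs_cases x with ⟨h, _⟩ | ⟨h, _⟩
  · rw [h]
  · rw [h, heven]

lemma phi_abs_mono (heven : ∀ x, φ (-x) = φ x) (hconv : ConvexOn ℝ Set.univ φ)
    (h0 : φ 0 = 0) (hnn : ∀ x, 0 ≤ φ x) {x y : ℝ} (h : |x| ≤ |y|) : φ x ≤ φ y := by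
  rw [phi_eq_abs heven x, phi_eq_abs heven y]
  exact phi_monoOn hconv h0 hnn _ _ (abs_nonneg x) h

lemma phi_linear_lb (hconv : ConvexOn ℝ Set.univ φ) (h0 : φ 0 = 0) {l : ℝ} (hl : 1 ≤ l) :
    φ 1 * l ≤ φ l := by
  have hl0 : 0 < l := lt_of_lt_of_le one_pos hl
  have h := hconv.2 (Set.mem_univ 0) (Set.mem_univ l) (by
    have := (div_le_one hl0).mpr hl; linarith : (0:ℝ) ≤ 1 - 1/l)
    (by positivity : (0:ℝ) ≤ 1/l) (by ring)
  simp only [smul_eq_mul, mul_zero, zero_add] at h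
  rw [one_div, inv_mul_cancel₀ hl0.ne', h0, mul_zero, zero_add] at h
  calc φ 1 * l ≤ (l⁻¹ * φ l) * l := mul_le_mul_of_nonneg_right h hl0.le
    _ = φ l := by field_simp

end PhiLemmas


section PhiStarLemmas
variable {φ : ℝ → ℝ}

lemma phiStar_bddAbove (hnn : ∀ x, 0 ≤ φ x)
    (htend : Tendsto (fun x : ℝ => φ x / x) atTop atTop) {u : ℝ} (hu : 0 ≤ u) :
    BddAbove (Set.range fun l : ℝ => l * u - φ l) := by
  obtain ⟨L, hL⟩ := (htend.eventually_ge_atTop (u + 1)).exists_forall_of_atTop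
  refine ⟨(max L 1) * u, ?_⟩
  rintro _ ⟨l, rfl⟩
  show l * u - φ l ≤ max L 1 * u
  rcases le_or_gt l 0 with hl | hl
  · have h1 : l * u ≤ 0 := mul_nonpos_of_nonpos_of_nonneg hl hu
    have := hnn l
    have h2 : (0:ℝ) ≤ max L 1 * u := mul_nonneg (le_trans zero_le_one (le_max_right L 1)) hu
    linarith
  · rcases le_or_gt l (max L 1) with hlL | hlL
    · have := hnn l
      have : l * u ≤ max L 1 * u := mul_le_mul_of_nonneg_right hlL hu
      linarith [hnn l]
    · have hlL' : L ≤ l := le_of_lt (lt_of_le_of_lt (le_max_left L 1) hlL)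
      have hl1 : (1:ℝ) ≤ l := le_of_lt (lt_of_le_of_lt (le_max_right L 1) hlL)
      have hdiv := hL l hlL'
      have : (u + 1) * l ≤ φ l := (le_div_iff₀ (lt_of_lt_of_le one_pos hl1)).mp hdiv
      have h2 : (0:ℝ) ≤ max L 1 * u := mul_nonneg (le_trans zero_le_one (le_max_right L 1)) hu
      nlinarith
end PhiStarLemmas
section PhiStarLemmas2
variable {φ : ℝ → ℝ}

lemma phiStar_nonneg (h0 : φ 0 = 0)
    (hbdd : BddAbove (Set.range fun l : ℝ => l * u - φ l)) : 0 ≤ phiStar φ u := by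
  have := le_ciSup hbdd 0
  simpa [h0, phiStar] using this

lemma phiStar_le (h : ∀ l : ℝ, l * u - φ l ≤ M) : phiStar φ u ≤ M := ciSup_le h

lemma phiStar_mono (heven : ∀ x, φ (-x) = φ x) (hconv : ConvexOn ℝ Set.univ φ)
    (h0 : φ 0 = 0) (hnn : ∀ x, 0 ≤ φ x) {x y : ℝ} (hx : 0 ≤ x) (hxy : x ≤ y)
    (hbdd : BddAbove (Set.range fun l : ℝ => l * y - φ l)) :
    phiStar φ x ≤ phiStar φ y := by
  refine ciSup_le fun l => ?_
  have h1 : l * x - φ l ≤ |l| * y - φ |l| := by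
    have : φ |l| = φ l := (phi_eq_abs heven l).symm
    rw [this]
    have : l * x ≤ |l| * y :=
      le_trans (mul_le_mul_of_nonneg_right (le_abs_self l) hx)
        (mul_le_mul_of_nonneg_left hxy (abs_nonneg l))
    linarith
  exact h1.trans (le_ciSup hbdd |l|)

lemma phiStar_combo (heven : ∀ x, φ (-x) = φ x) {a b θ : ℝ}
    (hbdda : BddAbove (Set.range fun l : ℝ => l * a - φ l))
    (hbddb : BddAbove (Set.range fun l : ℝ => l * b - φ l))
    (hθ0 : 0 ≤ θ) (hθ1 : θ ≤ 1) :
    phiStar φ (θ * a + (1 - θ) * b) ≤ θ * phiStar φ a + (1 - θ) * phiStar φ b := by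
  refine ciSup_le fun l => ?_
  have h1 : l * (θ * a + (1 - θ) * b) - φ l
      = θ * (l * a - φ l) + (1 - θ) * (l * b - φ l) := by ring
  rw [h1]
  exact add_le_add (mul_le_mul_of_nonneg_left (le_ciSup hbdda l) hθ0)
    (mul_le_mul_of_nonneg_left (le_ciSup hbddb l) (by linarith))

lemma phiStar_zero (h0 : φ 0 = 0) (hnn : ∀ x, 0 ≤ φ x)
    (hbdd : BddAbove (Set.range fun l : ℝ => l * (0:ℝ) - φ l)) : phiStar φ 0 = 0 := by
  refine le_antisymm (ciSup_le fun l => by simp [hnn l]) (phiStar_nonneg h0 hbdd)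

lemma phiStar_superadd (heven : ∀ x, φ (-x) = φ x) (h0 : φ 0 = 0) (hnn : ∀ x, 0 ≤ φ x)
    (htend : Tendsto (fun x : ℝ => φ x / x) atTop atTop)
    {x y : ℝ} (hx : 0 ≤ x) (hy : 0 ≤ y) :
    phiStar φ x + phiStar φ y ≤ phiStar φ (x + y) := by
  have hbdd0 := phiStar_bddAbove hnn htend (le_refl (0:ℝ))
  rcases eq_or_lt_of_le (add_nonneg hx hy) with hs | hs
  · have hx0 : x = 0 := by linarith [hx, hy]
    have hy0 : y = 0 := by linarith [hx, hy]
    simp [hx0, hy0, phiStar_zero h0 hnn hbdd0]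
  · set s := x + y with hsdef
    have hbdds := phiStar_bddAbove hnn htend (le_of_lt hs)
    have hxs : phiStar φ x ≤ (x/s) * phiStar φ s := by
      have h1 : x = (x/s) * s + (1 - x/s) * 0 := by field_simp; ring
      calc phiStar φ x = phiStar φ ((x/s) * s + (1 - x/s) * 0) := by rw [← h1]
        _ ≤ (x/s) * phiStar φ s + (1 - x/s) * phiStar φ 0 :=
          phiStar_combo heven hbdds hbdd0 (div_nonneg hx hs.le)
            (div_le_one_of_le₀ (by linarith) hs.le)
        _ = (x/s) * phiStar φ s := by rw [phiStar_zero h0 hnn hbdd0]; ring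
    have hys : phiStar φ y ≤ (y/s) * phiStar φ s := by
      have h1 : y = (y/s) * s + (1 - y/s) * 0 := by field_simp; ring
      calc phiStar φ y = phiStar φ ((y/s) * s + (1 - y/s) * 0) := by rw [← h1]
        _ ≤ (y/s) * phiStar φ s + (1 - y/s) * phiStar φ 0 :=
          phiStar_combo heven hbdds hbdd0 (div_nonneg hy hs.le)
            (div_le_one_of_le₀ (by linarith) hs.le)
        _ = (y/s) * phiStar φ s := by rw [phiStar_zero h0 hnn hbdd0]; ring
    have : (x/s) * phiStar φ s + (y/s) * phiStar φ s = phiStar φ s := by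
      field_simp
      ring
    linarith

lemma phiStar_scale (heven : ∀ x, φ (-x) = φ x) (h0 : φ 0 = 0) (hnn : ∀ x, 0 ≤ φ x)
    (htend : Tendsto (fun x : ℝ => φ x / x) atTop atTop)
    {k x : ℝ} (hk : 1 ≤ k) (hx : 0 ≤ x) :
    k * phiStar φ x ≤ phiStar φ (k * x) := by
  have hk0 : 0 < k := lt_of_lt_of_le one_pos hk
  have hbdd0 := phiStar_bddAbove hnn htend (le_refl (0:ℝ))
  have hbddkx := phiStar_bddAbove hnn htend (mul_nonneg hk0.le hx)
  have h1 : x = (1/k) * (k * x) + (1 - 1/k) * 0 := by field_simp; ring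
  have h2 : phiStar φ x ≤ (1/k) * phiStar φ (k * x) := by
    calc phiStar φ x = phiStar φ ((1/k) * (k * x) + (1 - 1/k) * 0) := by rw [← h1]
      _ ≤ (1/k) * phiStar φ (k * x) + (1 - 1/k) * phiStar φ 0 :=
        phiStar_combo heven hbddkx hbdd0 (by positivity)
          (by rw [div_le_one hk0]; exact hk)
      _ = (1/k) * phiStar φ (k * x) := by rw [phiStar_zero h0 hnn hbdd0]; ring
  calc k * phiStar φ x ≤ k * ((1/k) * phiStar φ (k*x)) := mul_le_mul_of_nonneg_left h2 hk0.le
    _ = phiStar φ (k * x) := by field_simp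

lemma phiStar_lb (hnn : ∀ x, 0 ≤ φ x)
    (htend : Tendsto (fun x : ℝ => φ x / x) atTop atTop) {x : ℝ} (hx : 0 ≤ x) :
    x - φ 1 ≤ phiStar φ x := by
  have := le_ciSup (phiStar_bddAbove hnn htend hx) (1:ℝ)
  simpa [phiStar] using this

lemma phiStar_small (heven : ∀ x, φ (-x) = φ x) (hconv : ConvexOn ℝ Set.univ φ)
    (h0 : φ 0 = 0) (hnn : ∀ x, 0 ≤ φ x) {Cm : ℝ} (hCm : 0 < Cm)
    (hlow : ∀ x : ℝ, |x| ≤ 1 → Cm * x ^ 2 ≤ φ x)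
    {x : ℝ} (hx : 0 ≤ x) (hxle : x ≤ φ 1) :
    phiStar φ x ≤ x^2 / (4 * Cm) := by
  refine ciSup_le fun l => ?_
  rcases le_or_gt |l| 1 with hl | hl
  · have h1 : Cm * l^2 ≤ φ l := hlow l hl
    have h2 : l * x ≤ |l| * x := mul_le_mul_of_nonneg_right (le_abs_self l) hx
    have h3 : |l| * x - Cm * l^2 ≤ x^2/(4*Cm) := by
      have habs : |l|^2 = l^2 := sq_abs l
      rw [le_div_iff₀ (by positivity : (0:ℝ) < 4*Cm), ← habs]
      nlinarith [sq_nonneg (2*Cm*|l| - x)]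
    linarith
  · rcases abs_cases l with ⟨hl1, _⟩ | ⟨hl1, _⟩
    · have hl2 : 1 ≤ l := by rw [← hl1]; exact hl.le
      have h1 := phi_linear_lb hconv h0 hl2
      have : l * x - φ l ≤ l * (x - φ 1) := by nlinarith
      have h2 : l * (x - φ 1) ≤ 0 :=
        mul_nonpos_of_nonneg_of_nonpos (by linarith) (by linarith)
      have : l * x - φ l ≤ 0 := by linarith
      have : (0:ℝ) ≤ x^2/(4*Cm) := by positivity
      linarith
    · have hlneg : l ≤ 0 := by nlinarith [abs_nonneg l]
      have h1 : l * x ≤ 0 := mul_nonpos_of_nonpos_of_nonneg hlneg hx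
      have : (0:ℝ) ≤ x^2/(4*Cm) := by positivity
      linarith [hnn l]

end PhiStarLemmas2

section Chernoff
variable {Ω : Type*} [MeasurableSpace Ω] {P : Measure Ω} {φ : ℝ → ℝ}

lemma lintegral_exp_of_bnorm (heven : ∀ x, φ (-x) = φ x) (hconv : ConvexOn ℝ Set.univ φ)
    (h0 : φ 0 = 0) (hnn : ∀ x, 0 ≤ φ x)
    {ζ : Ω → ℝ} {r b : ℝ} (hb : 0 < b) (hrb : r < b)
    (hB : BNorm P φ ζ ≤ ENNReal.ofReal r) :
    ∀ l : ℝ, ∫⁻ ω, ENNReal.ofReal (Real.exp (l * ζ ω)) ∂P ≤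
      ENNReal.ofReal (Real.exp (φ (b * l))) := by
  intro l
  have hlt : BNorm P φ ζ < ENNReal.ofReal b :=
    lt_of_le_of_lt hB ((ENNReal.ofReal_lt_ofReal_iff hb).mpr hrb)
  obtain ⟨τ, hτmem, hτlt⟩ := sInf_lt_iff.mp hlt
  obtain ⟨hτpos, hτtop, hτint⟩ := hτmem
  have hτle : τ.toReal ≤ b := ENNReal.toReal_le_of_le_ofReal hb.le hτlt.le
  refine (hτint l).trans ?_
  apply ENNReal.ofReal_le_ofReal
  apply Real.exp_le_exp.mpr
  apply phi_abs_mono heven hconv h0 hnn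
  rw [abs_mul, abs_mul]
  exact mul_le_mul_of_nonneg_right
    (by rw [abs_of_nonneg ENNReal.toReal_nonneg, abs_of_nonneg hb.le]; exact hτle)
    (abs_nonneg l)

lemma chernoff_upper [IsProbabilityMeasure P] (hnn : ∀ x, 0 ≤ φ x)
    {ζ : Ω → ℝ} (hζ : Measurable ζ) {b u : ℝ} (hb : 0 < b) (hu : 0 < u)
    (hE : ∀ l : ℝ, ∫⁻ ω, ENNReal.ofReal (Real.exp (l * ζ ω)) ∂P ≤
      ENNReal.ofReal (Real.exp (φ (b * l)))) :
    P {ω | u < ζ ω} ≤ ENNReal.ofReal (Real.exp (-(phiStar φ (u / b)))) := by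
  set s := phiStar φ (u / b) with hs
  refine ENNReal.le_of_forall_pos_le_add fun ε hε _ => ?_
  set δ := Real.log (1 + (ε:ℝ) * Real.exp s) with hδdef
  have hεepos : 0 < (ε:ℝ) * Real.exp s := mul_pos (by exact_mod_cast hε) (Real.exp_pos s)
  have hδpos : 0 < δ := Real.log_pos (by linarith)
  have heq : Real.exp (-s + δ) = Real.exp (-s) + (ε:ℝ) := by
    rw [Real.exp_add, hδdef, Real.exp_log (by linarith), Real.exp_neg]
    field_simp
  have hgoal : P {ω | u < ζ ω} ≤ ENNReal.ofReal (Real.exp (-s + δ)) := by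
    obtain ⟨m, hm⟩ := exists_lt_of_lt_ciSup (show s - δ < ⨆ l : ℝ, (l * (u/b) - φ l) by
      rw [show (⨆ l : ℝ, (l * (u/b) - φ l)) = s from rfl]; linarith)
    rcases le_or_gt m 0 with hm0 | hm0
    · have h1 : m * (u/b) ≤ 0 := mul_nonpos_of_nonpos_of_nonneg hm0 (by positivity)
      have h2 : (0:ℝ) ≤ -s + δ := by linarith [hnn m]
      calc P {ω | u < ζ ω} ≤ 1 := prob_le_one
        _ ≤ ENNReal.ofReal (Real.exp (-s + δ)) :=
          ENNReal.one_le_ofReal.mpr (Real.one_le_exp h2)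
    · set l := m / b with hldef
      have hl : 0 < l := div_pos hm0 hb
      have hbl : b * l = m := by rw [hldef]; field_simp
      have hmeas : Measurable fun ω => ENNReal.ofReal (Real.exp (l * ζ ω)) :=
        ((hζ.const_mul l).exp).ennreal_ofReal
      have hsub : {ω | u < ζ ω} ⊆
          {ω | ENNReal.ofReal (Real.exp (l * u)) ≤ ENNReal.ofReal (Real.exp (l * ζ ω))} := by
        intro ω hω
        exact ENNReal.ofReal_le_ofReal (Real.exp_le_exp.mpr
          (mul_le_mul_of_nonneg_left (le_of_lt hω) hl.le))
      have hkey := mul_meas_ge_le_lintegral₀ (μ := P) hmeas.aemeasurable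
        (ENNReal.ofReal (Real.exp (l * u)))
      have hkey2 : ENNReal.ofReal (Real.exp (l * u)) *
          P {ω | ENNReal.ofReal (Real.exp (l*u)) ≤ ENNReal.ofReal (Real.exp (l * ζ ω))} ≤
          ENNReal.ofReal (Real.exp (φ m)) := by
        refine hkey.trans ?_
        rw [← hbl]
        exact hE l
      have hne0 : ENNReal.ofReal (Real.exp (l * u)) ≠ 0 :=
        (ENNReal.ofReal_pos.mpr (Real.exp_pos _)).ne'
      have hneT : ENNReal.ofReal (Real.exp (l * u)) ≠ ⊤ := ENNReal.ofReal_ne_top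
      have hdiv : P {ω | ENNReal.ofReal (Real.exp (l*u)) ≤ ENNReal.ofReal (Real.exp (l * ζ ω))} ≤
          ENNReal.ofReal (Real.exp (φ m)) / ENNReal.ofReal (Real.exp (l * u)) := by
        rw [ENNReal.le_div_iff_mul_le (Or.inl hne0) (Or.inl hneT)]
        rw [mul_comm]
        exact hkey2
      have hdiveq : ENNReal.ofReal (Real.exp (φ m)) / ENNReal.ofReal (Real.exp (l * u)) =
          ENNReal.ofReal (Real.exp (φ m - l * u)) := by
        rw [← ENNReal.ofReal_div_of_pos (Real.exp_pos _), ← Real.exp_sub]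
      have hexp : φ m - l * u ≤ -s + δ := by
        have hlu : l * u = m * (u / b) := by rw [hldef]; ring
        rw [hlu]; linarith
      calc P {ω | u < ζ ω} ≤ _ := measure_mono hsub
        _ ≤ _ := hdiv
        _ = _ := hdiveq
        _ ≤ ENNReal.ofReal (Real.exp (-s + δ)) :=
          ENNReal.ofReal_le_ofReal (Real.exp_le_exp.mpr hexp)
  refine hgoal.trans ?_
  rw [heq, ENNReal.ofReal_add (Real.exp_nonneg _) (by positivity),
    ENNReal.ofReal_coe_nnreal]

lemma chernoff_abs [IsProbabilityMeasure P] (heven : ∀ x, φ (-x) = φ x) (hnn : ∀ x, 0 ≤ φ x)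
    {ζ : Ω → ℝ} (hζ : Measurable ζ) {b u : ℝ} (hb : 0 < b) (hu : 0 < u)
    (hE : ∀ l : ℝ, ∫⁻ ω, ENNReal.ofReal (Real.exp (l * ζ ω)) ∂P ≤
      ENNReal.ofReal (Real.exp (φ (b * l)))) :
    P {ω | u < |ζ ω|} ≤ ENNReal.ofReal (2 * Real.exp (-(phiStar φ (u / b)))) := by
  have hE' : ∀ l : ℝ, ∫⁻ ω, ENNReal.ofReal (Real.exp (l * (-ζ) ω)) ∂P ≤
      ENNReal.ofReal (Real.exp (φ (b * l))) := by
    intro l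
    have h1 : ∀ ω, l * (-ζ) ω = (-l) * ζ ω := by
      intro ω; show l * (-(ζ ω)) = (-l) * (ζ ω); ring
    calc ∫⁻ ω, ENNReal.ofReal (Real.exp (l * (-ζ) ω)) ∂P
        = ∫⁻ ω, ENNReal.ofReal (Real.exp ((-l) * ζ ω)) ∂P := by
          congr 1; funext ω; rw [h1]
      _ ≤ ENNReal.ofReal (Real.exp (φ (b * (-l)))) := hE (-l)
      _ = ENNReal.ofReal (Real.exp (φ (b * l))) := by
          rw [show b * (-l) = -(b*l) by ring, heven]
  have hsub : {ω | u < |ζ ω|} ⊆ {ω | u < ζ ω} ∪ {ω | u < (-ζ) ω} := by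
    intro ω hω
    rcases lt_abs.mp (show u < |ζ ω| from hω) with h | h
    · left; exact h
    · right; simpa using h
  calc P {ω | u < |ζ ω|} ≤ P ({ω | u < ζ ω} ∪ {ω | u < (-ζ) ω}) := measure_mono hsub
    _ ≤ P {ω | u < ζ ω} + P {ω | u < (-ζ) ω} := measure_union_le _ _
    _ ≤ ENNReal.ofReal (Real.exp (-(phiStar φ (u / b)))) +
        ENNReal.ofReal (Real.exp (-(phiStar φ (u / b)))) :=
      add_le_add (chernoff_upper hnn hζ hb hu hE) (chernoff_upper hnn hζ.neg hb hu hE')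
    _ = ENNReal.ofReal (2 * Real.exp (-(phiStar φ (u / b)))) := by
      rw [← ENNReal.ofReal_add (Real.exp_nonneg _) (Real.exp_nonneg _)]
      congr 1; ring

end Chernoff


lemma exists_good_net (T : Type*) [MetricSpace T] [CompactSpace T] [Nonempty T]
    {ε : ℝ} (hε : 0 < ε) :
    ∃ s : Finset T, (s.card : ℝ) ≤ Real.exp (metricEntropy T ε) ∧
      (0 ≤ metricEntropy T ε) ∧ ∀ x : T, ∃ c ∈ s, dist x c ≤ ε := by
  have hcompact : IsCompact (Set.univ : Set T) := isCompact_univ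
  obtain ⟨F, hF⟩ := hcompact.elim_finite_subcover (fun t : T => Metric.ball t ε)
    (fun _ => Metric.isOpen_ball) (by
      intro x _
      exact Set.mem_iUnion.mpr ⟨x, Metric.mem_ball_self hε⟩)
  have hne : {n : ℕ | ∃ s : Finset T, s.card = n ∧ ∀ x : T, ∃ c ∈ s, dist x c ≤ ε}.Nonempty := by
    refine ⟨F.card, F, rfl, fun x => ?_⟩
    have := hF (Set.mem_univ x)
    simp only [Set.mem_iUnion] at this
    obtain ⟨c, hc, hxc⟩ := this
    exact ⟨c, hc, (Metric.mem_ball.mp hxc).le⟩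
  have hmem := Nat.sInf_mem hne
  obtain ⟨s, hcard, hcover⟩ := hmem
  have hsne : s.Nonempty := by
    obtain ⟨c, hc, _⟩ := hcover (Classical.arbitrary T)
    exact ⟨c, hc⟩
  have hpos : 0 < (coveringNumber T ε : ℝ) := by
    rw [coveringNumber, ← hcard]
    exact_mod_cast Finset.card_pos.mpr hsne
  refine ⟨s, ?_, ?_, hcover⟩
  · rw [metricEntropy, Real.exp_log hpos, hcard, coveringNumber]
  · exact Real.log_nonneg (by exact_mod_cast hpos)

set_option maxHeartbeats 2000000 in
/-- Entropy bound for the maximum: if a centered process `ξ` on a compact metric space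
`(T,d)` with continuous paths satisfies `sup_t ‖ξ(t)‖B(φ) ≤ 1`,
`‖ξ(t) − ξ(s)‖B(φ) ≤ d(s,t)`, and the entropy series `Σ 2^{-n} H(T,d,2^{-n})` converges,
then `β = sup_t ξ(t)` satisfies `P(|β| > u) ≤ 2 exp(−φ*(u/C))` for all `u ≥ 1` and some
constant `C ∈ (0,∞)`. -/
theorem entropy_tail_bound_for_maximum
    {Ω : Type*} [MeasurableSpace Ω] (P : Measure Ω) [IsProbabilityMeasure P]
    (φ : ℝ → ℝ) (hφ : IsPhiClass φ)
    (T : Type*) [MetricSpace T] [CompactSpace T] [Nonempty T]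
    (ξ : Ω → T → ℝ)
    (h_meas : ∀ t : T, Measurable (fun ω => ξ ω t))
    (h_cont : ∀ ω : Ω, Continuous (ξ ω))
    (h_cent : ∀ t : T, Integrable (fun ω => ξ ω t) P ∧ (∫ ω, ξ ω t ∂P) = 0)
    (h_bnorm : ∀ t : T, BNorm P φ (fun ω => ξ ω t) ≤ 1)
    (h_incr : ∀ s t : T, BNorm P φ (fun ω => ξ ω t - ξ ω s) ≤ ENNReal.ofReal (dist s t))
    (h_entropy : Summable (fun n : ℕ =>
      (2 : ℝ) ^ (-((n : ℝ) + 1)) * metricEntropy T ((2 : ℝ) ^ (-((n : ℝ) + 1))))) :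
    ∃ C : ℝ, 0 < C ∧ ∀ u : ℝ, 1 ≤ u →
      (P {ω | u < |⨆ t : T, ξ ω t|}).toReal ≤
        2 * Real.exp (-(phiStar φ (u / C))) := by
  classical
  obtain ⟨heven, hsconv, hcontφ, hnn, hzero, ⟨Cm, Cp, hCm, hCmp, hC⟩, htend⟩ := hφ
  have hconv : ConvexOn ℝ Set.univ φ := hsconv.convexOn
  have h0 : φ 0 = 0 := (hzero 0).mpr rfl
  have hφ1 : 0 < φ 1 := lt_of_le_of_ne (hnn 1) fun h => by simpa using (hzero 1).mp h.symm
  -- scales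
  set r : ℕ → ℝ := fun n => (2:ℝ) ^ (-((n:ℝ)+1)) with hrdef
  have hr_eq : ∀ n : ℕ, r n = (1/2:ℝ)^(n+1) := by
    intro n
    rw [hrdef]
    show (2:ℝ) ^ (-((n:ℝ)+1)) = (1/2:ℝ)^(n+1)
    rw [show (-((n:ℝ)+1)) = -(((n+1:ℕ):ℝ)) by push_cast; ring,
      Real.rpow_neg (by norm_num), Real.rpow_natCast]
    rw [one_div, inv_pow]
  have hr_pos : ∀ n, 0 < r n := by intro n; rw [hr_eq]; positivity
  have hr_anti : ∀ n, r (n+1) ≤ r n := by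
    intro n
    rw [hr_eq, hr_eq]
    exact pow_le_pow_of_le_one (by norm_num) (by norm_num) (by omega)
  -- nets
  choose B hB1 hB2 hB3 using fun n : ℕ => exists_good_net T (hr_pos n)
  set H : ℕ → ℝ := fun n => metricEntropy T (r n) with hHdef
  have hH0 : ∀ n, 0 ≤ H n := hB2
  have hsum1 : Summable (fun n => r n * H n) := by
    simp only [hHdef, hrdef]
    exact h_entropy
  -- weights
  set sfn : ℕ → ℝ := fun n => (n:ℝ) + 1 + H n + H (n+1) with hsfndef
  have hsfn_pos : ∀ n, 0 < sfn n := by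
    intro n
    have := hH0 n; have := hH0 (n+1)
    simp only [hsfndef]
    positivity
  set w : ℕ → ℝ := fun n => r n * sfn n with hwdef
  have hw_pos : ∀ n, 0 < w n := fun n => mul_pos (hr_pos n) (hsfn_pos n)
  have hr_two : ∀ n, r n = 2 * r (n+1) := by
    intro n; rw [hr_eq, hr_eq]; ring
  have hsumw : Summable w := by
    have S1 : Summable (fun n : ℕ => r n * ((n:ℝ)+1)) := by
      have hgeo := summable_pow_mul_geometric_of_norm_lt_one 1
        (show ‖(1/2:ℝ)‖ < 1 by rw [Real.norm_eq_abs, abs_of_pos (by norm_num : (0:ℝ) < 1/2)]; norm_num)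
      have := hgeo.comp_injective (add_left_injective 1)
      refine this.congr fun n => ?_
      show ((n+1:ℕ):ℝ)^1 * (1/2)^(n+1) = r n * ((n:ℝ)+1)
      rw [hr_eq]; push_cast; ring
    have S3 : Summable (fun n : ℕ => r n * H (n+1)) := by
      have := (hsum1.comp_injective (add_left_injective 1)).mul_left 2
      refine this.congr fun n => ?_
      show 2 * (r (n+1) * H (n+1)) = r n * H (n+1)
      rw [hr_two n]; ring
    refine ((S1.add hsum1).add S3).congr fun n => ?_
    show (r n * ((n:ℝ)+1) + r n * H n) + r n * H (n+1) = w n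
    simp only [hwdef, hsfndef]; ring
  set A : ℝ := ∑' n, w n with hAdef
  have hApos : 0 < A := Summable.tsum_pos hsumw (fun n => (hw_pos n).le) 0 (hw_pos 0)
  -- constants
  set c : ℝ := max (8*A) 16 with hcdef
  have hc16 : (16:ℝ) ≤ c := le_max_right _ _
  have hc8A : 8*A ≤ c := le_max_left _ _
  have hcpos : 0 < c := lt_of_lt_of_le (by norm_num) hc16
  set M : ℝ := 2 + H 0 + Real.log 2 + Real.log 13 with hMdef
  have hlog2 : (0:ℝ) ≤ Real.log 2 := Real.log_nonneg (by norm_num)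
  have hlog13 : (0:ℝ) ≤ Real.log 13 := Real.log_nonneg (by norm_num)
  have hM2 : (2:ℝ) ≤ M := by simp only [hMdef]; linarith [hH0 0]
  set u₀ : ℝ := 2*c*(M + φ 1) with hu₀def
  have hu₀pos : 0 < u₀ := by
    have : (0:ℝ) < M + φ 1 := by linarith
    positivity
  set δ : ℝ := min (φ 1) (Real.sqrt (Cm * Real.log 2)) with hδdef
  have hδpos : 0 < δ := by
    apply lt_min hφ1
    apply Real.sqrt_pos.mpr
    have : (0:ℝ) < Real.log 2 := Real.log_pos (by norm_num)
    positivity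
  set C : ℝ := max (2*c) (u₀/δ) with hCdef
  have hCpos : 0 < C := lt_of_lt_of_le (by linarith) (le_max_left _ _)
  -- global phiStar facts
  have hbddx : ∀ x : ℝ, 0 ≤ x → BddAbove (Set.range fun l : ℝ => l * x - φ l) :=
    fun x hx => phiStar_bddAbove hnn htend hx
  have hstar_nonneg : ∀ x : ℝ, 0 ≤ x → 0 ≤ phiStar φ x :=
    fun x hx => phiStar_nonneg h0 (hbddx x hx)
  have hstar_mono : ∀ x y : ℝ, 0 ≤ x → x ≤ y → phiStar φ x ≤ phiStar φ y :=
    fun x y hx hxy => phiStar_mono heven hconv h0 hnn hx hxy (hbddx y (hx.trans hxy))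
  refine ⟨C, hCpos, ?_⟩
  intro u hu
  rcases lt_or_ge u u₀ with hcase | hcase
  -- SMALL u
  · have huC : u / C ≤ δ := by
      have h1 : u₀ / δ ≤ C := le_max_right _ _
      have h2 : u₀ ≤ δ * C := by
        rw [← div_le_iff₀' hδpos]
        exact h1
      have h3 : u ≤ δ * C := le_trans hcase.le h2
      rw [div_le_iff₀ hCpos]
      linarith [h3]
    have hsmall : phiStar φ (u/C) ≤ Real.log 2 := by
      have hx0 : 0 ≤ u / C := div_nonneg (by linarith) hCpos.le
      have hxφ1 : u / C ≤ φ 1 := huC.trans (min_le_left _ _)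
      have h1 := phiStar_small heven hconv h0 hnn hCm (fun x hx => (hC x hx).1) hx0 hxφ1
      have h2 : (u/C)^2 ≤ Cm * Real.log 2 := by
        have hδs : δ ≤ Real.sqrt (Cm * Real.log 2) := min_le_right _ _
        have h3 : (u/C)^2 ≤ δ^2 := by nlinarith [huC, hx0, hδpos]
        have h4 : δ^2 ≤ Cm * Real.log 2 := by
          have := Real.sq_sqrt (show (0:ℝ) ≤ Cm * Real.log 2 by positivity)
          nlinarith [hδpos]
        linarith
      refine h1.trans ?_
      rw [div_le_iff₀ (by positivity : (0:ℝ) < 4*Cm)]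
      nlinarith [Real.log_nonneg (show (1:ℝ) ≤ 2 by norm_num)]
    have h1 : (P {ω | u < |⨆ t : T, ξ ω t|}).toReal ≤ 1 := by
      have h2 : (P {ω | u < |⨆ t : T, ξ ω t|}).toReal ≤ (1:ℝ≥0∞).toReal :=
        ENNReal.toReal_mono ENNReal.one_ne_top prob_le_one
      simpa using h2
    have h2 : (1:ℝ) ≤ 2 * Real.exp (-(phiStar φ (u/C))) := by
      have h3 : Real.exp (-Real.log 2) ≤ Real.exp (-(phiStar φ (u/C))) :=
        Real.exp_le_exp.mpr (by linarith)
      have h4 : Real.exp (-Real.log 2) = 1/2 := by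
        rw [Real.exp_neg, Real.exp_log (by norm_num : (0:ℝ) < 2)]; norm_num
      linarith [h3, h4 ▸ h3]
    linarith
  -- LARGE u
  · -- LARGE u
    have upos : 0 < u := lt_of_lt_of_le hu₀pos hcase
    have huc1 : 0 ≤ u / c := div_nonneg upos.le hcpos.le
    have hu2c0 : 0 ≤ u / (2*c) := div_nonneg upos.le (by linarith)
    have hu₀2c : u₀ / (2*c) = M + φ 1 := by
      rw [hu₀def]; field_simp
    have hstarM : M ≤ phiStar φ (u/(2*c)) := by
      have h1 : M ≤ phiStar φ (u₀/(2*c)) := by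
        have h2 := phiStar_lb hnn htend (div_nonneg hu₀pos.le (by linarith : (0:ℝ) ≤ 2*c))
        rw [hu₀2c] at h2 ⊢
        linarith
      refine h1.trans (hstar_mono _ _ (div_nonneg hu₀pos.le (by linarith)) ?_)
      exact (div_le_div_iff_of_pos_right (by linarith : (0:ℝ) < 2*c)).mpr hcase
    have h2c_c : u/(2*c) ≤ u/c :=
      div_le_div_of_nonneg_left upos.le hcpos (by linarith)
    have hstaruc : M ≤ phiStar φ (u/c) := hstarM.trans (hstar_mono _ _ hu2c0 h2c_c)
    set v : ℕ → ℝ := fun n => (u/(2*A)) * w n with hvdef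
    have hv_pos : ∀ n, 0 < v n := fun n => mul_pos (by positivity) (hw_pos n)
    set Pair : ℕ → Finset (T × T) := fun n =>
      (B n ×ˢ B (n+1)).filter (fun p => dist p.1 p.2 ≤ 2 * r n) with hPairdef
    set Bad : Set Ω :=
      (⋃ a ∈ B 0, {ω | u/2 < |ξ ω a|}) ∪
        ⋃ n : ℕ, ⋃ p ∈ Pair n, {ω | v n < |ξ ω p.2 - ξ ω p.1|} with hBaddef
    choose pr hprmem hprdist using hB3
    -- STEP 1 : inclusion of events
    have hstep1 : {ω | u < |⨆ t : T, ξ ω t|} ⊆ Bad := by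
      intro ω hω
      by_contra hωBad
      rw [hBaddef] at hωBad
      simp only [Set.mem_union, Set.mem_iUnion, Set.mem_setOf_eq, not_or, not_exists,
        not_lt] at hωBad
      obtain ⟨hroot, hlev⟩ := hωBad
      have hbound : ∀ t : T, |ξ ω t| ≤ u := by
        intro t
        have hchain : ∀ m, |ξ ω (pr m t)| ≤ u/2 + ∑ n ∈ Finset.range m, v n := by
          intro m
          induction m with
          | zero => simpa using hroot (pr 0 t) (hprmem 0 t)
          | succ m ih =>
            have hpairmem : (pr m t, pr (m+1) t) ∈ Pair m := by
              rw [hPairdef]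
              refine Finset.mem_filter.mpr
                ⟨Finset.mem_product.mpr ⟨hprmem m t, hprmem (m+1) t⟩, ?_⟩
              calc dist (pr m t) (pr (m+1) t)
                  ≤ dist (pr m t) t + dist t (pr (m+1) t) := dist_triangle _ _ _
                _ ≤ r m + r (m+1) := add_le_add
                    (by rw [dist_comm]; exact hprdist m t) (hprdist (m+1) t)
                _ ≤ 2 * r m := by linarith [hr_anti m]
            have hd := hlev m (pr m t, pr (m+1) t) hpairmem
            have habs2 : |ξ ω (pr (m+1) t)| ≤
                |ξ ω (pr m t)| + |ξ ω (pr (m+1) t) - ξ ω (pr m t)| := by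
              calc |ξ ω (pr (m+1) t)|
                  = |ξ ω (pr m t) + (ξ ω (pr (m+1) t) - ξ ω (pr m t))| := by ring_nf
                _ ≤ _ := abs_add_le _ _
            rw [Finset.sum_range_succ]
            simp only at hd
            linarith
        have hpsum : ∀ m, ∑ n ∈ Finset.range m, v n ≤ u/2 := by
          intro m
          have h1 : ∑ n ∈ Finset.range m, w n ≤ A :=
            Summable.sum_le_tsum _ (fun i _ => (hw_pos i).le) hsumw
          have h2 : ∑ n ∈ Finset.range m, v n
              = (u/(2*A)) * ∑ n ∈ Finset.range m, w n := by
            rw [hvdef, Finset.mul_sum]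
          rw [h2]
          calc (u/(2*A)) * ∑ n ∈ Finset.range m, w n ≤ (u/(2*A)) * A :=
              mul_le_mul_of_nonneg_left h1 (by positivity)
            _ = u/2 := by field_simp
        have hbm : ∀ m, |ξ ω (pr m t)| ≤ u := fun m =>
          (hchain m).trans (by linarith [hpsum m])
        have hrlim : Tendsto (fun m : ℕ => r m) atTop (nhds 0) := by
          have h1 := tendsto_pow_atTop_nhds_zero_of_lt_one
            (show (0:ℝ) ≤ 1/2 by norm_num) (show (1/2:ℝ) < 1 by norm_num)
          have h2 := h1.comp (tendsto_add_atTop_nat 1)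
          exact h2.congr fun m => (hr_eq m).symm
        have htlim : Tendsto (fun m => pr m t) atTop (nhds t) := by
          rw [tendsto_iff_dist_tendsto_zero]
          refine squeeze_zero (fun m => dist_nonneg) (fun m => ?_) hrlim
          rw [dist_comm]; exact hprdist m t
        have hξlim : Tendsto (fun m => ξ ω (pr m t)) atTop (nhds (ξ ω t)) :=
          ((h_cont ω).tendsto t).comp htlim
        exact le_of_tendsto hξlim.abs (Filter.Eventually.of_forall hbm)
      have hBdd : BddAbove (Set.range (ξ ω)) :=
        ⟨u, by rintro _ ⟨t, rfl⟩; exact (abs_le.mp (hbound t)).2⟩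
      have hsup_le : (⨆ t : T, ξ ω t) ≤ u := ciSup_le fun t => (abs_le.mp (hbound t)).2
      have hsup_ge : -u ≤ ⨆ t : T, ξ ω t := by
        have t₁ := Classical.arbitrary T
        exact le_trans (abs_le.mp (hbound t₁)).1 (le_ciSup hBdd t₁)
      exact absurd hω (not_lt.mpr (abs_le.mpr ⟨hsup_ge, hsup_le⟩))
    -- STEP 2 : probability bound
    -- root bounds
    have hrootpt : ∀ a : T, P {ω | u/2 < |ξ ω a|} ≤
        ENNReal.ofReal (2 * Real.exp (-(phiStar φ (u/4)))) := by
      intro a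
      have hB : BNorm P φ (fun ω => ξ ω a) ≤ ENNReal.ofReal 1 := by
        rw [ENNReal.ofReal_one]; exact h_bnorm a
      have hE := lintegral_exp_of_bnorm heven hconv h0 hnn (show (0:ℝ) < 2 by norm_num)
        (show (1:ℝ) < 2 by norm_num) hB
      have h2 := chernoff_abs heven hnn (h_meas a) (show (0:ℝ) < 2 by norm_num)
        (show 0 < u/2 by positivity) hE
      rw [show u/2/2 = u/4 by ring] at h2
      exact h2
    have hroot : P (⋃ a ∈ B 0, {ω | u/2 < |ξ ω a|}) ≤
        ENNReal.ofReal (Real.exp (H 0) * (2 * Real.exp (-(phiStar φ (u/4))))) := by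
      calc P (⋃ a ∈ B 0, {ω | u/2 < |ξ ω a|})
          ≤ ∑ a ∈ B 0, P {ω | u/2 < |ξ ω a|} := measure_biUnion_finset_le _ _
        _ ≤ ∑ _a ∈ B 0, ENNReal.ofReal (2 * Real.exp (-(phiStar φ (u/4)))) :=
            Finset.sum_le_sum fun a _ => hrootpt a
        _ = ((B 0).card : ℝ≥0∞) * ENNReal.ofReal (2 * Real.exp (-(phiStar φ (u/4)))) := by
            rw [Finset.sum_const, nsmul_eq_mul]
        _ ≤ ENNReal.ofReal (Real.exp (H 0)) *
              ENNReal.ofReal (2 * Real.exp (-(phiStar φ (u/4)))) := by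
            refine mul_le_mul_left ?_ _
            rw [← ENNReal.ofReal_natCast]
            exact ENNReal.ofReal_le_ofReal (hB1 0)
        _ = ENNReal.ofReal (Real.exp (H 0) * (2 * Real.exp (-(phiStar φ (u/4))))) :=
            (ENNReal.ofReal_mul (Real.exp_nonneg _)).symm
    have hrootreal : Real.exp (H 0) * (2 * Real.exp (-(phiStar φ (u/4)))) ≤
        Real.exp (-(phiStar φ (u/c))) := by
      have h1 : u/c ≤ u/16 := div_le_div_of_nonneg_left upos.le (by norm_num) hc16
      have hsplit : u/c + u/8 ≤ u/4 := by
        have h2 : u/16 + u/8 ≤ u/4 := by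
          rw [div_add_div _ _ (by norm_num : (16:ℝ) ≠ 0) (by norm_num : (8:ℝ) ≠ 0)]
          rw [div_le_div_iff₀ (by norm_num) (by norm_num)]
          nlinarith [upos.le]
        linarith
      have h2 : phiStar φ (u/c) + phiStar φ (u/8) ≤ phiStar φ (u/4) :=
        (phiStar_superadd heven h0 hnn htend huc1 (by positivity)).trans
          (hstar_mono _ _ (by positivity) hsplit)
      have h3 : H 0 + Real.log 2 ≤ phiStar φ (u/8) := by
        have h4 : u/(2*c) ≤ u/8 :=
          div_le_div_of_nonneg_left upos.le (by norm_num) (by linarith)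
        have h5 := hstarM.trans (hstar_mono _ _ hu2c0 h4)
        rw [hMdef] at h5
        linarith
      have h5 : phiStar φ (u/c) + H 0 + Real.log 2 ≤ phiStar φ (u/4) := by linarith
      have heq2 : Real.exp (H 0) * (2 * Real.exp (-(phiStar φ (u/4))))
          = Real.exp (H 0 + Real.log 2 + -(phiStar φ (u/4))) := by
        simp only [Real.exp_add]
        rw [Real.exp_log (by norm_num : (0:ℝ) < 2)]
        ring
      rw [heq2]
      exact Real.exp_le_exp.mpr (by linarith)
    -- level bounds
    have hpairbd : ∀ n : ℕ, ∀ p ∈ Pair n, P {ω | v n < |ξ ω p.2 - ξ ω p.1|} ≤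
        ENNReal.ofReal (2 * Real.exp (-(phiStar φ (u * sfn n / c)))) := by
      intro n p hp
      rw [hPairdef] at hp
      simp only [Finset.mem_filter] at hp
      obtain ⟨hp1, hp2⟩ := hp
      have hBp : BNorm P φ (fun ω => ξ ω p.2 - ξ ω p.1) ≤ ENNReal.ofReal (2 * r n) :=
        (h_incr p.1 p.2).trans (ENNReal.ofReal_le_ofReal hp2)
      have hE := lintegral_exp_of_bnorm heven hconv h0 hnn
        (show (0:ℝ) < 4 * r n by linarith [hr_pos n])
        (show 2 * r n < 4 * r n by linarith [hr_pos n]) hBp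
      have h2 := chernoff_abs heven hnn ((h_meas p.2).sub (h_meas p.1))
        (show (0:ℝ) < 4 * r n by linarith [hr_pos n]) (hv_pos n) hE
      refine h2.trans (ENNReal.ofReal_le_ofReal ?_)
      have hveq : v n / (4 * r n) = u * sfn n / (8*A) := by
        rw [hvdef, hwdef]
        field_simp
        rw [mul_assoc, mul_div_cancel_left₀ _ (hr_pos n).ne']; ring
      have harg : u * sfn n / c ≤ v n / (4 * r n) := by
        rw [hveq]
        exact div_le_div_of_nonneg_left (mul_nonneg upos.le (hsfn_pos n).le)
          (by linarith : (0:ℝ) < 8*A) hc8A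
      have h3 := hstar_mono _ _ (div_nonneg (mul_nonneg upos.le (hsfn_pos n).le) hcpos.le) harg
      have h4 := Real.exp_le_exp.mpr (neg_le_neg h3)
      linarith
    have hlevel : ∀ n : ℕ, P (⋃ p ∈ Pair n, {ω | v n < |ξ ω p.2 - ξ ω p.1|}) ≤
        ENNReal.ofReal (2 * Real.exp 1 * Real.exp (-(2*(n:ℝ))) *
          Real.exp (-(phiStar φ (u/c)))) := by
      intro n
      have hcard : ((Pair n).card : ℝ) ≤ Real.exp (H n + H (n+1)) := by
        calc ((Pair n).card : ℝ) ≤ (((B n ×ˢ B (n+1)).card : ℕ) : ℝ) := by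
              exact_mod_cast Finset.card_filter_le _ _
          _ = ((B n).card : ℝ) * ((B (n+1)).card : ℝ) := by
              rw [Finset.card_product]; push_cast; ring
          _ ≤ Real.exp (H n) * Real.exp (H (n+1)) :=
              mul_le_mul (hB1 n) (hB1 (n+1)) (Nat.cast_nonneg _) (Real.exp_nonneg _)
          _ = Real.exp (H n + H (n+1)) := (Real.exp_add _ _).symm
      have hGnn : 0 ≤ H n + H (n+1) := add_nonneg (hH0 n) (hH0 (n+1))
      have hkey : Real.exp (H n + H (n+1)) * (2 * Real.exp (-(phiStar φ (u * sfn n / c)))) ≤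
          2 * Real.exp 1 * Real.exp (-(2*(n:ℝ))) * Real.exp (-(phiStar φ (u/c))) := by
        have hsplit : u * sfn n / c = u/c + (n:ℝ)*(u/c) + (H n + H (n+1))*(u/c) := by
          rw [hsfndef]
          field_simp
          ring
        have h2M : 2 ≤ phiStar φ (u/c) := by linarith
        have hn2 : 2*(n:ℝ) ≤ phiStar φ ((n:ℝ)*(u/c)) := by
          rcases Nat.eq_zero_or_pos n with hn | hn
          · rw [hn]
            simp [phiStar_zero h0 hnn (hbddx 0 le_rfl)]
          · have hn1 : (1:ℝ) ≤ (n:ℝ) := by exact_mod_cast hn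
            have hsc := phiStar_scale heven h0 hnn htend hn1 huc1
            nlinarith
        have hG : (H n + H (n+1)) - 1 ≤ phiStar φ ((H n + H (n+1))*(u/c)) := by
          rcases le_or_gt 1 (H n + H (n+1)) with hG1 | hG1
          · have hsc := phiStar_scale heven h0 hnn htend hG1 huc1
            nlinarith
          · have h6 := hstar_nonneg ((H n + H (n+1))*(u/c)) (mul_nonneg hGnn huc1)
            linarith
        have hsup2 := phiStar_superadd heven h0 hnn htend huc1
          (mul_nonneg (Nat.cast_nonneg n) huc1)
        have hsup1 := phiStar_superadd heven h0 hnn htend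
          (add_nonneg huc1 (mul_nonneg (Nat.cast_nonneg n) huc1)) (mul_nonneg hGnn huc1)
        have hlow : phiStar φ (u/c) + 2*(n:ℝ) + ((H n + H (n+1)) - 1) ≤
            phiStar φ (u * sfn n / c) := by
          rw [hsplit]
          linarith
        have heq1 : Real.exp (H n + H (n+1)) * (2 * Real.exp (-(phiStar φ (u * sfn n / c))))
            = 2 * Real.exp ((H n + H (n+1)) + -(phiStar φ (u * sfn n / c))) := by
          simp only [Real.exp_add]; ring
        have heq2 : 2 * Real.exp 1 * Real.exp (-(2*(n:ℝ))) * Real.exp (-(phiStar φ (u/c)))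
            = 2 * Real.exp (1 + -(2*(n:ℝ)) + -(phiStar φ (u/c))) := by
          simp only [Real.exp_add]; ring
        rw [heq1, heq2]
        have h7 : (H n + H (n+1)) + -(phiStar φ (u * sfn n / c)) ≤
            1 + -(2*(n:ℝ)) + -(phiStar φ (u/c)) := by linarith
        exact mul_le_mul_of_nonneg_left (Real.exp_le_exp.mpr h7) (by norm_num)
      calc P (⋃ p ∈ Pair n, {ω | v n < |ξ ω p.2 - ξ ω p.1|})
          ≤ ∑ p ∈ Pair n, P {ω | v n < |ξ ω p.2 - ξ ω p.1|} :=
            measure_biUnion_finset_le _ _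
        _ ≤ ∑ _p ∈ Pair n, ENNReal.ofReal (2 * Real.exp (-(phiStar φ (u * sfn n / c)))) :=
            Finset.sum_le_sum fun p hp => hpairbd n p hp
        _ = ((Pair n).card : ℝ≥0∞) *
              ENNReal.ofReal (2 * Real.exp (-(phiStar φ (u * sfn n / c)))) := by
            rw [Finset.sum_const, nsmul_eq_mul]
        _ ≤ ENNReal.ofReal (Real.exp (H n + H (n+1))) *
              ENNReal.ofReal (2 * Real.exp (-(phiStar φ (u * sfn n / c)))) := by
            refine mul_le_mul_left ?_ _
            rw [← ENNReal.ofReal_natCast]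
            exact ENNReal.ofReal_le_ofReal hcard
        _ = ENNReal.ofReal (Real.exp (H n + H (n+1)) *
              (2 * Real.exp (-(phiStar φ (u * sfn n / c))))) :=
            (ENNReal.ofReal_mul (Real.exp_nonneg _)).symm
        _ ≤ _ := ENNReal.ofReal_le_ofReal hkey
    have hq1 : Real.exp (-2 : ℝ) < 1 := Real.exp_lt_one_iff.mpr (by norm_num)
    have hgeo : Summable (fun n : ℕ => (Real.exp (-2:ℝ))^n) :=
      summable_geometric_of_lt_one (Real.exp_nonneg _) hq1
    have hterm : ∀ n : ℕ, 2 * Real.exp 1 * Real.exp (-(2*(n:ℝ))) *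
        Real.exp (-(phiStar φ (u/c)))
        = (2 * Real.exp 1 * Real.exp (-(phiStar φ (u/c)))) * (Real.exp (-2:ℝ))^n := by
      intro n
      rw [← Real.exp_nat_mul, show (n:ℝ) * (-2:ℝ) = -(2*(n:ℝ)) by ring]
      ring
    have hgeosum : Summable (fun n : ℕ => 2 * Real.exp 1 * Real.exp (-(2*(n:ℝ))) *
        Real.exp (-(phiStar φ (u/c)))) := by
      refine ((hgeo.mul_left (2 * Real.exp 1 * Real.exp (-(phiStar φ (u/c)))))).congr
        fun n => ?_
      rw [hterm n]
    have hlevelsum : (∑' n : ℕ, ENNReal.ofReal (2 * Real.exp 1 * Real.exp (-(2*(n:ℝ))) *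
        Real.exp (-(phiStar φ (u/c))))) ≤
        ENNReal.ofReal (12 * Real.exp (-(phiStar φ (u/c)))) := by
      rw [← ENNReal.ofReal_tsum_of_nonneg (fun n => by positivity) hgeosum]
      apply ENNReal.ofReal_le_ofReal
      rw [tsum_congr hterm, tsum_mul_left, tsum_geometric_of_lt_one (Real.exp_nonneg _) hq1]
      have he1 : Real.exp 1 ≤ 3 := by
        have := Real.exp_one_lt_d9
        linarith
      have he2 : Real.exp (-2:ℝ) ≤ 1/2 := by
        have h8 : (2:ℝ) ≤ Real.exp 2 := by linarith [Real.add_one_le_exp (2:ℝ)]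
        rw [Real.exp_neg]
        have h9 : (0:ℝ) < Real.exp 2 := Real.exp_pos 2
        rw [inv_le_comm₀ h9 (by norm_num)]
        linarith
      have hqpos : (0:ℝ) < 1 - Real.exp (-2:ℝ) := by linarith
      have hinv : (1 - Real.exp (-2:ℝ))⁻¹ ≤ 2 := by
        rw [inv_le_comm₀ hqpos (by norm_num)]
        linarith
      have hK := Real.exp_nonneg (-(phiStar φ (u/c)))
      have hinv0 : (0:ℝ) ≤ (1 - Real.exp (-2:ℝ))⁻¹ := by positivity
      have m1 : Real.exp 1 * (1 - Real.exp (-2:ℝ))⁻¹ ≤ 3 * 2 :=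
        mul_le_mul he1 hinv hinv0 (by norm_num)
      have m2 := mul_le_mul_of_nonneg_left m1
        (mul_nonneg (show (0:ℝ) ≤ 2 by norm_num) hK)
      nlinarith [m2]
    have htotal : P Bad ≤ ENNReal.ofReal (Real.exp (-(phiStar φ (u/(2*c))))) := by
      have h1 : P Bad ≤ ENNReal.ofReal (Real.exp (-(phiStar φ (u/c)))) +
          ENNReal.ofReal (12 * Real.exp (-(phiStar φ (u/c)))) := by
        rw [hBaddef]
        refine (measure_union_le _ _).trans
          (add_le_add (hroot.trans (ENNReal.ofReal_le_ofReal hrootreal)) ?_)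
        refine (measure_iUnion_le _).trans ?_
        exact (ENNReal.tsum_le_tsum fun n => hlevel n).trans hlevelsum
      rw [← ENNReal.ofReal_add (Real.exp_nonneg _) (by positivity)] at h1
      refine h1.trans (ENNReal.ofReal_le_ofReal ?_)
      have hsc := phiStar_scale heven h0 hnn htend (show (1:ℝ) ≤ 2 by norm_num) hu2c0
      have h2q : 2*(u/(2*c)) = u/c := by field_simp
      rw [h2q] at hsc
      have hlog13' : Real.log 13 ≤ phiStar φ (u/(2*c)) := by
        have hstarM' := hstarM
        rw [hMdef] at hstarM'
        linarith [hH0 0]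
      have h2 : phiStar φ (u/(2*c)) + Real.log 13 ≤ phiStar φ (u/c) := by
        have hge0 := hstar_nonneg (u/(2*c)) hu2c0
        linarith
      have heq3 : Real.exp (-(phiStar φ (u/c))) + 12 * Real.exp (-(phiStar φ (u/c)))
          = 13 * Real.exp (-(phiStar φ (u/c))) := by ring
      rw [heq3]
      have h10 : Real.exp (-(phiStar φ (u/c))) ≤
          Real.exp (-(phiStar φ (u/(2*c)) + Real.log 13)) :=
        Real.exp_le_exp.mpr (by linarith)
      have heq4 : Real.exp (-(phiStar φ (u/(2*c)) + Real.log 13))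
          = Real.exp (-(phiStar φ (u/(2*c)))) / 13 := by
        rw [show -(phiStar φ (u/(2*c)) + Real.log 13)
            = -(phiStar φ (u/(2*c))) + -(Real.log 13) by ring, Real.exp_add,
          Real.exp_neg, Real.exp_neg, Real.exp_log (by norm_num : (0:ℝ) < 13)]
        ring
      rw [heq4] at h10
      linarith
    -- conclude
    have hfinal := (measure_mono hstep1).trans htotal
    have hCge : u / C ≤ u / (2*c) :=
      div_le_div_of_nonneg_left upos.le (by linarith) (le_max_left _ _)
    have hmono2 : phiStar φ (u/C) ≤ phiStar φ (u/(2*c)) :=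
      hstar_mono _ _ (by positivity) hCge
    calc (P {ω | u < |⨆ t : T, ξ ω t|}).toReal
        ≤ (ENNReal.ofReal (Real.exp (-(phiStar φ (u/(2*c)))))).toReal :=
          ENNReal.toReal_mono ENNReal.ofReal_ne_top hfinal
      _ = Real.exp (-(phiStar φ (u/(2*c)))) := ENNReal.toReal_ofReal (Real.exp_nonneg _)
      _ ≤ 2 * Real.exp (-(phiStar φ (u/C))) := by
          have h11 := Real.exp_le_exp.mpr (neg_le_neg hmono2)
          linarith [Real.exp_nonneg (-(phiStar φ (u/C)))]
end

section
/- Let p > 1 and q = p/(p−1), and let φ_p(λ) = λ² for |λ| ≤ 1, φ_p(λ) = |λ|^p for |λ| > 1, and similarly φ_q. Then the Young–Fenchel conjugate φ_p* satisfies φ_p* ≍ φ_q, i.e. there exist constants 0 < c₁ ≤ c₂ < ∞ such that c₁ φ_q(u) ≤ φ_p*(u) ≤ c₂ φ_q(u) for all u ∈ ℝ. -/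
open Filter Real

/-- The function `φ_p(λ) = λ²` for `|λ| ≤ 1` and `φ_p(λ) = |λ|^p` for `|λ| > 1`. -/
noncomputable def phiP (p : ℝ) (l : ℝ) : ℝ := if |l| ≤ 1 then l ^ 2 else |l| ^ p

/-- For `p > 1` and the conjugate exponent `q = p/(p−1)`, the Young–Fenchel conjugate of
`φ_p` is weakly equivalent to `φ_q`: there are constants `0 < c₁ ≤ c₂ < ∞` with
`c₁ φ_q(u) ≤ φ_p*(u) ≤ c₂ φ_q(u)` for all `u ∈ ℝ`. -/
theorem phiP_conjugate_equiv_phiQ (p q : ℝ) (hp : 1 < p) (hq : q = p / (p - 1)) :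
    ∃ c₁ c₂ : ℝ, 0 < c₁ ∧ c₁ ≤ c₂ ∧
      ∀ u : ℝ, c₁ * phiP q u ≤ phiStar (phiP p) u ∧ phiStar (phiP p) u ≤ c₂ * phiP q u := by
  have hpq : p.HolderConjugate q := (Real.holderConjugate_iff_eq_conjExponent hp).2 hq
  have hq1 : 1 < q := hpq.symm.lt
  have hp0 : (0 : ℝ) < p := hpq.pos
  have hq0 : (0 : ℝ) < q := hpq.symm.pos
  set A : ℝ := (2 : ℝ) ^ (-q) / 4 with hA
  set B : ℝ := (p - 1) / p ^ q with hB
  set C : ℝ := p ^ (1 - q) / 2 with hC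
  have hApos : 0 < A := by
    have := Real.rpow_pos_of_pos (by norm_num : (0:ℝ) < 2) (-q); positivity
  have hBpos : 0 < B := by
    have := Real.rpow_pos_of_pos hp0 q
    have : (0:ℝ) < p - 1 := by linarith
    positivity
  have hCpos : 0 < C := by
    have := Real.rpow_pos_of_pos hp0 (1 - q); positivity
  set c₁ : ℝ := min A (min B C) with hc₁
  refine ⟨c₁, 1, lt_min hApos (lt_min hBpos hCpos), ?_, ?_⟩
  · have h2q : (2 : ℝ) ^ (-q) ≤ 1 :=
      Real.rpow_le_one_of_one_le_of_nonpos (by norm_num) (by linarith)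
    have : c₁ ≤ A := min_le_left _ _
    rw [hA] at this; linarith
  intro u
  -- key upper bound: every term is at most phiP q u
  have key : ∀ l : ℝ, l * u - phiP p l ≤ phiP q u := by
    intro l
    have hlu : l * u ≤ |l| * |u| := by
      calc l * u ≤ |l * u| := le_abs_self _
        _ = |l| * |u| := abs_mul l u
    simp only [phiP]
    rcases le_or_gt |u| 1 with hu | hu
    · rw [if_pos hu]
      rcases le_or_gt |l| 1 with hl | hl
      · rw [if_pos hl]
        nlinarith [sq_nonneg (u - 2 * l), sq_nonneg u]
      · rw [if_neg (not_le.2 hl)]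
        have h1 : |l| ^ (1:ℝ) ≤ |l| ^ p :=
          Real.rpow_le_rpow_of_exponent_le hl.le hp.le
        rw [Real.rpow_one] at h1
        have h2 : 0 ≤ |l| * (1 - |u|) := mul_nonneg (abs_nonneg l) (by linarith)
        nlinarith [sq_nonneg u]
    · rw [if_neg (not_le.2 hu)]
      have huq : |u| ≤ |u| ^ q := by
        have := Real.rpow_le_rpow_of_exponent_le hu.le hq1.le
        rwa [Real.rpow_one] at this
      rcases le_or_gt |l| 1 with hl | hl
      · rw [if_pos hl]
        have h2 : 0 ≤ (1 - |l|) * |u| := mul_nonneg (by linarith) (abs_nonneg u)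
        nlinarith [sq_nonneg l]
      · rw [if_neg (not_le.2 hl)]
        have hy := Real.young_inequality_of_nonneg (abs_nonneg l) (abs_nonneg u) hpq
        have hlp : (0:ℝ) ≤ |l| ^ p := Real.rpow_nonneg (abs_nonneg l) p
        have huq0 : (0:ℝ) ≤ |u| ^ q := Real.rpow_nonneg (abs_nonneg u) q
        have h3 : |l| ^ p / p ≤ |l| ^ p := div_le_self hlp hp.le
        have h4 : |u| ^ q / q ≤ |u| ^ q := div_le_self huq0 hq1.le
        linarith
  have hbdd : BddAbove (Set.range fun l : ℝ => l * u - phiP p l) := by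
    refine ⟨phiP q u, ?_⟩
    rintro x ⟨l, rfl⟩
    exact key l
  constructor
  swap
  · rw [phiStar, one_mul]
    exact ciSup_le key
  -- lower bound
  rw [phiStar]
  -- helper to choose l with a given absolute value, aligned with the sign of u
  have sign : ∀ a : ℝ, 0 ≤ a → ∃ l : ℝ, |l| = a ∧ l * u = a * |u| := by
    intro a ha
    rcases le_or_gt 0 u with h | h
    · exact ⟨a, abs_of_nonneg ha, by rw [abs_of_nonneg h]⟩
    · exact ⟨-a, by rw [abs_neg, abs_of_nonneg ha], by rw [abs_of_neg h]; ring⟩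
  rcases le_or_gt |u| 2 with hu2 | hu2
  · -- small u : use l = u/2
    have habs2 : |u / 2| ≤ 1 := by
      rw [abs_div, abs_of_nonneg (by norm_num : (0:ℝ) ≤ 2)]
      exact div_le_one_of_le₀ hu2 (by norm_num)
    have hterm : (u/2) * u - phiP p (u/2) = u^2 / 4 := by
      rw [phiP, if_pos habs2]
      ring
    have hle : (u/2) * u - phiP p (u/2) ≤ ⨆ l : ℝ, (l * u - phiP p l) :=
      le_ciSup hbdd (u/2)
    rw [hterm] at hle
    refine le_trans ?_ hle
    rcases le_or_gt |u| 1 with hu1 | hu1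
    · rw [phiP, if_pos hu1]
      have hcA : c₁ ≤ A := min_le_left _ _
      have h2q : (2 : ℝ) ^ (-q) ≤ 1 :=
        Real.rpow_le_one_of_one_le_of_nonpos (by norm_num) (by linarith)
      have : c₁ ≤ 1/4 := by rw [hA] at hcA; linarith
      nlinarith [sq_nonneg u, (lt_min hApos (lt_min hBpos hCpos)).le]
    · rw [phiP, if_neg (not_le.2 hu1)]
      have h1 : |u| ^ q ≤ (2:ℝ) ^ q := Real.rpow_le_rpow (abs_nonneg u) hu2 hq0.le
      have h2 : (2:ℝ) ^ (-q) * (2:ℝ) ^ q = 1 := by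
        rw [← Real.rpow_add (by norm_num : (0:ℝ) < 2)]; norm_num
      have hcA : c₁ ≤ A := min_le_left _ _
      have hc₁pos : 0 < c₁ := lt_min hApos (lt_min hBpos hCpos)
      have huq0 : (0:ℝ) ≤ |u| ^ q := Real.rpow_nonneg (abs_nonneg u) q
      have hA2 : A * |u| ^ q ≤ 1/4 := by
        rw [hA]
        calc (2:ℝ) ^ (-q) / 4 * |u| ^ q ≤ (2:ℝ) ^ (-q) / 4 * (2:ℝ) ^ q := by
              have : (0:ℝ) ≤ (2:ℝ) ^ (-q) / 4 := by positivity
              exact mul_le_mul_of_nonneg_left h1 this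
          _ = 1/4 := by rw [div_mul_eq_mul_div, h2]
      have hsq : 1 ≤ u ^ 2 := by nlinarith [sq_abs u]
      calc c₁ * |u| ^ q ≤ A * |u| ^ q := mul_le_mul_of_nonneg_right hcA huq0
        _ ≤ 1/4 := hA2
        _ ≤ u^2/4 := by linarith
  · -- large u
    have hu1 : 1 < |u| := by linarith
    have hune : |u| ≠ 0 := by positivity
    rw [phiP, if_neg (not_le.2 hu1)]
    have huq0 : (0:ℝ) ≤ |u| ^ q := Real.rpow_nonneg (abs_nonneg u) q
    rcases le_or_gt p |u| with hup | hup
    · -- use l with |l| = (|u|/p)^(q-1)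
      set a : ℝ := (|u|/p) ^ (q-1) with ha
      have ha1 : 1 ≤ a :=
        Real.one_le_rpow ((one_le_div hp0).2 hup) (by linarith)
      obtain ⟨l₀, hl₀abs, hl₀mul⟩ := sign a (by linarith)
      have hφ : phiP p l₀ ≤ a ^ p := by
        rw [phiP]
        split_ifs with h
        · have hA1 : a = 1 := le_antisymm (hl₀abs ▸ h) ha1
          rw [← sq_abs, hl₀abs, hA1, Real.one_rpow, one_pow]
        · rw [hl₀abs]
      have hle : l₀ * u - phiP p l₀ ≤ ⨆ l : ℝ, (l * u - phiP p l) := le_ciSup hbdd l₀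
      have hterm : a * |u| - a ^ p ≤ l₀ * u - phiP p l₀ := by
        rw [hl₀mul]; linarith
      refine le_trans ?_ (le_trans hterm hle)
      have hdiv : (0:ℝ) ≤ |u| / p := by positivity
      have hqp : (q - 1) * p = q := hpq.symm.sub_one_mul_conj
      have hq11 : q - 1 + 1 = q := by ring
      have hap : a ^ p = |u| ^ q / p ^ q := by
        rw [ha, ← Real.rpow_mul hdiv, hqp]
        exact Real.div_rpow (abs_nonneg u) hp0.le q
      have hamul : a * |u| = |u| ^ q / p ^ (q-1) := by
        rw [ha, Real.div_rpow (abs_nonneg u) hp0.le, div_mul_eq_mul_div,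
          ← Real.rpow_add_one hune, hq11]
      rw [hap, hamul]
      have hP : (0:ℝ) < p ^ (q-1) := Real.rpow_pos_of_pos hp0 _
      have hPq : p ^ q = p ^ (q-1) * p := by
        rw [← Real.rpow_add_one hp0.ne', hq11]
      have hcB : c₁ ≤ B := le_trans (min_le_right _ _) (min_le_left _ _)
      have hrhs : |u| ^ q / p ^ (q-1) - |u| ^ q / p ^ q
          = ((p - 1) / p ^ q) * |u| ^ q := by
        rw [hPq]
        field_simp
      rw [hrhs]
      exact mul_le_mul_of_nonneg_right (hB ▸ hcB) huq0
    · -- use l with |l| = 1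
      obtain ⟨l₀, hl₀abs, hl₀mul⟩ := sign 1 zero_le_one
      have hφ : phiP p l₀ = 1 := by
        rw [phiP, if_pos (le_of_eq hl₀abs), ← sq_abs, hl₀abs, one_pow]
      have hterm : l₀ * u - phiP p l₀ = |u| - 1 := by rw [hφ, hl₀mul, one_mul]
      have hle : l₀ * u - phiP p l₀ ≤ ⨆ l : ℝ, (l * u - phiP p l) := le_ciSup hbdd l₀
      rw [hterm] at hle
      refine le_trans ?_ hle
      have hcC : c₁ ≤ C := le_trans (min_le_right _ _) (min_le_right _ _)
      have h1 : |u| ^ (q-1) ≤ p ^ (q-1) :=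
        Real.rpow_le_rpow (abs_nonneg u) hup.le (by linarith)
      have h2 : p ^ (1-q) * p ^ (q-1) = 1 := by
        rw [← Real.rpow_add hp0]; norm_num
      have h3 : |u| ^ q = |u| ^ (q-1) * |u| := by
        rw [← Real.rpow_add_one hune]; ring_nf
      have hkey2 : p ^ (1-q) * |u| ^ q ≤ |u| := by
        rw [h3]
        calc p ^ (1-q) * (|u| ^ (q-1) * |u|) ≤ p ^ (1-q) * (p ^ (q-1) * |u|) := by
              have hx : (0:ℝ) ≤ p ^ (1-q) := (Real.rpow_pos_of_pos hp0 _).le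
              exact mul_le_mul_of_nonneg_left
                (mul_le_mul_of_nonneg_right h1 (abs_nonneg u)) hx
          _ = (p ^ (1-q) * p ^ (q-1)) * |u| := by ring
          _ = |u| := by rw [h2, one_mul]
      calc c₁ * |u| ^ q ≤ C * |u| ^ q := mul_le_mul_of_nonneg_right hcC huq0
        _ = (p ^ (1-q) * |u| ^ q) / 2 := by rw [hC]; ring
        _ ≤ |u| / 2 := by linarith
        _ ≤ |u| - 1 := by linarith
end
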